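/- arXiv:2107.09813 — 4 statements merged into one kernel-verified Lean document; each statement's English description precedes it below -/
import Mathlib

section
/- Let C = (ρ_i)_{i∈A} be a continuous family in T of stable degree m. Then Γ_{ρ_i}^0 = Γ_C for every i ∈ A with deg(ρ_i) = m. In particular, the stable group Γ_C is a subgroup of Λ. -/
open Polynomial

namespace MLV

variable {K : Type*} [Field K] {Λ : Type*} [AddCommGroup Λ] [LinearOrder Λ] [IsOrderedAddMonoid Λ]

/-- A valuation on the field `K` with values in `Λ∞ = WithTop Λ`. -/
structure FieldVal (K : Type*) (Λ : Type*) [Field K] [AddCommGroup Λ] [LinearOrder Λ] [IsOrderedAddMonoid Λ] where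
  v : K → WithTop Λ
  map_one' : v 1 = 0
  map_zero' : v 0 = ⊤
  ne_top' : ∀ a : K, a ≠ 0 → v a ≠ ⊤
  map_mul' : ∀ a b : K, v (a * b) = v a + v b
  map_add' : ∀ a b : K, min (v a) (v b) ≤ v (a + b)

/-- `μ` is a node of the tree `T = T(Λ)`: a valuation on `K[x]` with values in `Λ∞`
whose restriction to `K` is `v`. -/
def IsValT (v : FieldVal K Λ) (μ : Polynomial K → WithTop Λ) : Prop :=
  μ 1 = 0 ∧ μ 0 = ⊤ ∧ (∀ f g : Polynomial K, μ (f * g) = μ f + μ g) ∧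
    (∀ f g : Polynomial K, min (μ f) (μ g) ≤ μ (f + g)) ∧
    ∀ a : K, μ (C a) = v.v a

/-- `g ∼_μ h` : `μ(g - h) > μ(g)`. -/
def MuEquiv (μ : Polynomial K → WithTop Λ) (g h : Polynomial K) : Prop :=
  μ g < μ (g - h)

/-- `h ∣_μ g` : `g ∼_μ f * h` for some `f`. -/
def MuDvd (μ : Polynomial K → WithTop Λ) (h g : Polynomial K) : Prop :=
  ∃ f : Polynomial K, MuEquiv μ g (f * h)

/-- `g ∈ K[x] \ K` is `μ`-minimal if it `μ`-divides no nonzero polynomial of smaller degree. -/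
def IsMuMinimal (μ : Polynomial K → WithTop Λ) (g : Polynomial K) : Prop :=
  0 < g.natDegree ∧
    ∀ f : Polynomial K, f ≠ 0 → f.degree < g.degree → ¬ MuDvd μ g f

/-- `g` is `μ`-irreducible. -/
def IsMuIrreducible (μ : Polynomial K → WithTop Λ) (g : Polynomial K) : Prop :=
  μ g ≠ ⊤ ∧ (¬ ∃ f : Polynomial K, MuEquiv μ (f * g) 1) ∧
    ∀ f h : Polynomial K, MuDvd μ g (f * h) → MuDvd μ g f ∨ MuDvd μ g h

/-- A (Maclane-Vaquié) key polynomial for `μ`. -/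
def IsKeyPol (μ : Polynomial K → WithTop Λ) (φ : Polynomial K) : Prop :=
  φ.Monic ∧ IsMuMinimal μ φ ∧ IsMuIrreducible μ φ

/-- An inner node: a valuation admitting key polynomials. -/
def IsInnerNode (μ : Polynomial K → WithTop Λ) : Prop :=
  ∃ φ : Polynomial K, IsKeyPol μ φ

/-- `deg(μ)`: the minimal degree of a key polynomial for `μ`. -/
noncomputable def degOf (μ : Polynomial K → WithTop Λ) : ℕ :=
  sInf {n : ℕ | ∃ φ : Polynomial K, IsKeyPol μ φ ∧ φ.natDegree = n}

/-- A key polynomial of minimal degree. -/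
def IsMinKeyPol (μ : Polynomial K → WithTop Λ) (φ : Polynomial K) : Prop :=
  IsKeyPol μ φ ∧ ∀ ψ : Polynomial K, IsKeyPol μ ψ → φ.natDegree ≤ ψ.natDegree

/-- the class `[φ]_μ` of key polynomials `μ`-equivalent to `φ`. -/
def KeyPolClass (μ : Polynomial K → WithTop Λ) (φ : Polynomial K) : Set (Polynomial K) :=
  {ψ : Polynomial K | IsKeyPol μ ψ ∧ MuEquiv μ ψ φ}

/-- The coefficient `a_s` of the `φ`-expansion `f = Σ_s a_s φ^s` (for `φ` monic nonconstant). -/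
noncomputable def expCoeff (φ f : Polynomial K) (s : ℕ) : Polynomial K :=
  (f /ₘ φ ^ s) %ₘ φ

/-- The augmented valuation `[μ; φ, γ]`, acting on `φ`-expansions by
`ν(Σ_s a_s φ^s) = min_s (μ(a_s) + s γ)`. -/
noncomputable def augVal (μ : Polynomial K → WithTop Λ) (φ : Polynomial K)
    (γ : WithTop Λ) (f : Polynomial K) : WithTop Λ :=
  (Finset.range (f.natDegree + 1)).inf'
    (Finset.nonempty_range_iff.mpr (Nat.succ_ne_zero _))
    fun s => μ (expCoeff φ f s) + s • γ

/-- The depth-zero valuation `ω_{a,δ}`, acting on `(x-a)`-expansions by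
`ω(Σ_s a_s (x-a)^s) = min_s (v(a_s) + s δ)`. -/
noncomputable def omegaVal (v : FieldVal K Λ) (a : K) (δ : WithTop Λ)
    (f : Polynomial K) : WithTop Λ :=
  (Finset.range (f.natDegree + 1)).inf'
    (Finset.nonempty_range_iff.mpr (Nat.succ_ne_zero _))
    fun s => v.v ((taylor a f).coeff s) + s • δ

/-- The tangent direction `t(μ,ν)`: monic polynomials of minimal degree with `μ(φ) < ν(φ)`. -/
def TangentDir (μ ν : Polynomial K → WithTop Λ) : Set (Polynomial K) :=
  {φ : Polynomial K | φ.Monic ∧ μ φ < ν φ ∧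
    ∀ ψ : Polynomial K, ψ.Monic → μ ψ < ν ψ → φ.natDegree ≤ ψ.natDegree}

/-- The set of finite values of `μ`. -/
def valSet (μ : Polynomial K → WithTop Λ) : Set Λ :=
  {γ : Λ | ∃ f : Polynomial K, μ f = (γ : WithTop Λ)}

/-- The value group `Γ_μ`. -/
def valGroup (μ : Polynomial K → WithTop Λ) : AddSubgroup Λ :=
  AddSubgroup.closure (valSet μ)

/-- `Γ = v(K^*)` as a subset of `Λ`. -/
def gammaSet (v : FieldVal K Λ) : Set Λ :=
  {γ : Λ | ∃ a : K, v.v a = (γ : WithTop Λ)}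

/-- The value group `Γ` of the base field valuation. -/
def baseGroup (v : FieldVal K Λ) : AddSubgroup Λ :=
  AddSubgroup.closure (gammaSet v)

/-- `μ` is commensurable over `v` : `Γ_μ/Γ` is torsion. -/
def IsCommensurable (v : FieldVal K Λ) (μ : Polynomial K → WithTop Λ) : Prop :=
  ∀ γ : Λ, γ ∈ valGroup μ → ∃ n : ℕ, 0 < n ∧ n • γ ∈ baseGroup v

/-- `Γ_μ^0 = {μ(a) : a ∈ K[x], 0 ≤ deg(a) < deg(μ)}`. -/
noncomputable def degZeroSet (μ : Polynomial K → WithTop Λ) : Set Λ :=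
  {δ : Λ | ∃ a : Polynomial K, a ≠ 0 ∧ a.natDegree < degOf μ ∧ μ a = (δ : WithTop Λ)}

/-- Equivalence of valuations: an order-preserving isomorphism `ι : Γ_μ → Γ_ν`
with `ν = ι ∘ μ`. -/
def ValEquiv (μ ν : Polynomial K → WithTop Λ) : Prop :=
  ∃ ι : valGroup μ ≃+ valGroup ν,
    Monotone ι ∧ (∀ f : Polynomial K, μ f = ⊤ ↔ ν f = ⊤) ∧
    ∀ (f : Polynomial K) (γ : Λ) (h : μ f = (γ : WithTop Λ)),
      ν f = ((ι ⟨γ, AddSubgroup.subset_closure ⟨f, h⟩⟩ : Λ) : WithTop Λ)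

/-- `β ∼_sme γ` : an order-preserving isomorphism `⟨Γ,β⟩ → ⟨Γ,γ⟩` fixing `Γ`
and mapping `β` to `γ`. -/
def SmeEquiv (v : FieldVal K Λ) (β γ : Λ) : Prop :=
  ∃ ι : (AddSubgroup.closure (gammaSet v ∪ {β}) : AddSubgroup Λ) ≃+
      (AddSubgroup.closure (gammaSet v ∪ {γ}) : AddSubgroup Λ),
    Monotone ι ∧
    (∀ (a : Λ) (ha : a ∈ gammaSet v),
      ((ι ⟨a, AddSubgroup.subset_closure (Set.mem_union_left _ ha)⟩ : Λ) = a)) ∧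
    ((ι ⟨β, AddSubgroup.subset_closure (Set.mem_union_right _ rfl)⟩ : Λ) = γ)

section Families

variable {ι : Type*} [LinearOrder ι]

/-- A totally ordered family of inner nodes of `T`, indexed order-isomorphically by a
totally ordered set, containing no maximal element. -/
def IsTOFamily (v : FieldVal K Λ) (ρ : ι → Polynomial K → WithTop Λ) : Prop :=
  (∀ i, IsValT v (ρ i)) ∧ (∀ i, IsInnerNode (ρ i)) ∧ StrictMono ρ ∧
    ∀ i : ι, ∃ j : ι, i < j

/-- `f` is `A`-stable: the values `ρ_i(f)` are eventually constant. -/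
def IsStablePoly (ρ : ι → Polynomial K → WithTop Λ) (f : Polynomial K) : Prop :=
  ∃ i : ι, ∀ j : ι, i ≤ j → ρ j f = ρ i f

/-- `β` is the stable value `ρ_A(f)`. -/
def IsStableVal (ρ : ι → Polynomial K → WithTop Λ) (f : Polynomial K)
    (β : WithTop Λ) : Prop :=
  ∃ i : ι, ∀ j : ι, i ≤ j → ρ j f = β

open Classical in
/-- The stability function `ρ_A` (junk value `⊤` on unstable polynomials). -/
noncomputable def stableVal (ρ : ι → Polynomial K → WithTop Λ) (f : Polynomial K) :
    WithTop Λ :=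
  if h : ∃ β : WithTop Λ, IsStableVal ρ f β then h.choose else ⊤

/-- The family has stable degree `m`. -/
def HasStableDeg (ρ : ι → Polynomial K → WithTop Λ) (m : ℕ) : Prop :=
  ∃ i : ι, ∀ j : ι, i ≤ j → degOf (ρ j) = m

/-- A continuous family: a totally ordered family of eventually constant degree. -/
def IsContFamily (v : FieldVal K Λ) (ρ : ι → Polynomial K → WithTop Λ) : Prop :=
  IsTOFamily v ρ ∧ ∃ m : ℕ, HasStableDeg ρ m

/-- The stable group `Γ_C`: stable values of nonzero stable polynomials. -/
def stableSet (ρ : ι → Polynomial K → WithTop Λ) : Set Λ :=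
  {δ : Λ | ∃ f : Polynomial K, f ≠ 0 ∧ IsStableVal ρ f (δ : WithTop Λ)}

/-- A limit key polynomial: monic, unstable, of minimal degree among unstable polynomials. -/
def IsLimKeyPol (ρ : ι → Polynomial K → WithTop Λ) (φ : Polynomial K) : Prop :=
  φ.Monic ∧ ¬ IsStablePoly ρ φ ∧
    ∀ f : Polynomial K, ¬ IsStablePoly ρ f → φ.natDegree ≤ f.natDegree

/-- An essential continuous family: `m(C) < m_∞(C) < ∞`. -/
def IsEssential (v : FieldVal K Λ) (ρ : ι → Polynomial K → WithTop Λ) : Prop :=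
  IsTOFamily v ρ ∧
    ∃ m : ℕ, HasStableDeg ρ m ∧
      ∃ φ : Polynomial K, IsLimKeyPol ρ φ ∧ m < φ.natDegree

/-- The limit augmentation `[C; φ, γ]`, acting on `φ`-expansions by
`ν(Σ_s a_s φ^s) = min_s (ρ_C(a_s) + s γ)`. -/
noncomputable def limAugVal (ρ : ι → Polynomial K → WithTop Λ) (φ : Polynomial K)
    (γ : WithTop Λ) (f : Polynomial K) : WithTop Λ :=
  (Finset.range (f.natDegree + 1)).inf'
    (Finset.nonempty_range_iff.mpr (Nat.succ_ne_zero _))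
    fun s => stableVal ρ (expCoeff φ f s) + s • γ

/-- Equivalence of totally ordered families: mutual cofinality. -/
def FamEquiv {κ : Type*} [LinearOrder κ] (ρ : ι → Polynomial K → WithTop Λ)
    (σ : κ → Polynomial K → WithTop Λ) : Prop :=
  (∀ i : ι, ∃ j : κ, ρ i ≤ σ j) ∧ ∀ j : κ, ∃ i : ι, σ j ≤ ρ i

end Families

end MLV

open MLV

section Aux

open Polynomial MLV

variable {K : Type*} [Field K] {Λ : Type*} [AddCommGroup Λ] [LinearOrder Λ] [IsOrderedAddMonoid Λ]
variable {v : FieldVal K Λ} {μ ν : Polynomial K → WithTop Λ}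

theorem vt_neg (hμ : IsValT v μ) (f : Polynomial K) : μ (-f) = μ f := by
  have hmul := hμ.2.2.1
  have h1 : μ (-1 : Polynomial K) + μ (-1 : Polynomial K) = 0 := by
    have h := hmul (-1) (-1)
    rw [neg_one_mul, neg_neg, hμ.1] at h
    exact h.symm
  have hne : μ (-1 : Polynomial K) ≠ ⊤ := by
    intro h
    rw [h, top_add] at h1
    simp at h1
  obtain ⟨a, ha⟩ := WithTop.ne_top_iff_exists.mp hne
  have haa : a + a = 0 := by
    have h2 := h1
    rw [← ha] at h2
    exact_mod_cast h2
  have ha0 : a = 0 := by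
    rcases lt_trichotomy a 0 with h | h | h
    · have h2 : a + a < 0 + 0 := add_lt_add h h
      rw [add_zero, haa] at h2
      exact absurd h2 (lt_irrefl 0)
    · exact h
    · have h2 : 0 + 0 < a + a := add_lt_add h h
      rw [add_zero, haa] at h2
      exact absurd h2 (lt_irrefl 0)
  have hneg1 : μ (-1 : Polynomial K) = 0 := by
    rw [← ha, ha0, WithTop.coe_zero]
  calc μ (-f) = μ ((-1) * f) := by rw [neg_one_mul]
  _ = μ (-1) + μ f := hmul _ _
  _ = μ f := by rw [hneg1, zero_add]

theorem vt_sub_ge (hμ : IsValT v μ) (f g : Polynomial K) : min (μ f) (μ g) ≤ μ (f - g) := by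
  rw [sub_eq_add_neg]
  calc min (μ f) (μ g) = min (μ f) (μ (-g)) := by rw [vt_neg hμ]
  _ ≤ μ (f + -g) := hμ.2.2.2.1 _ _

theorem vt_add_eq (hμ : IsValT v μ) {f g : Polynomial K} (h : μ f < μ g) : μ (f + g) = μ f := by
  refine le_antisymm ?_ ?_
  · by_contra hc
    push_neg at hc
    have h1 : min (μ (f + g)) (μ g) ≤ μ f := by
      have e : (f + g) - g = f := by ring
      calc min (μ (f + g)) (μ g) ≤ μ ((f + g) - g) := vt_sub_ge hμ _ _
      _ = μ f := by rw [e]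
    exact absurd h1 (not_le.mpr (lt_min hc h))
  · calc μ f = min (μ f) (μ g) := (min_eq_left h.le).symm
    _ ≤ μ (f + g) := hμ.2.2.2.1 _ _

theorem vt_sum (hμ : IsValT v μ) {α : WithTop Λ} {S : Finset ℕ} {t : ℕ → Polynomial K}
    (h : ∀ s ∈ S, α ≤ μ (t s)) : α ≤ μ (∑ s ∈ S, t s) := by
  classical
  induction S using Finset.induction_on with
  | empty => simp [hμ.2.1]
  | insert _ _ hx ih =>
    rw [Finset.sum_insert hx]
    refine le_trans (le_min (h _ (Finset.mem_insert_self _ _))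
      (ih fun s hs => h s (Finset.mem_insert_of_mem hs))) (hμ.2.2.2.1 _ _)

theorem scale_monic (f : Polynomial K) (hf : f ≠ 0) :
    ∃ (c : K) (g : Polynomial K), c ≠ 0 ∧ g.Monic ∧ g.natDegree = f.natDegree ∧
      f = Polynomial.C c * g := by
  have hlc : f.leadingCoeff ≠ 0 := leadingCoeff_ne_zero.mpr hf
  refine ⟨f.leadingCoeff, f * Polynomial.C f.leadingCoeff⁻¹, hlc,
    monic_mul_leadingCoeff_inv hf, ?_, ?_⟩
  · rw [natDegree_mul hf (by simp [hlc])]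
    simp
  · rw [mul_comm f, ← mul_assoc, ← Polynomial.C_mul, mul_inv_cancel₀ hlc, Polynomial.C_1,
      one_mul]

theorem scale_lt (hμ : IsValT v μ) (hν : IsValT v ν) {f : Polynomial K} (hf : μ f < ν f) :
    ∃ g : Polynomial K, g.Monic ∧ g.natDegree = f.natDegree ∧ μ g < ν g := by
  have hf0 : f ≠ 0 := by
    rintro rfl
    rw [hμ.2.1, hν.2.1] at hf
    exact lt_irrefl _ hf
  obtain ⟨c, g, hc, hgm, hgd, rfl⟩ := scale_monic f hf0
  rw [hμ.2.2.1, hν.2.2.1, hμ.2.2.2.2, hν.2.2.2.2] at hf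
  exact ⟨g, hgm, hgd, (WithTop.add_lt_add_iff_left (v.ne_top' c hc)).mp hf⟩

theorem agree_of_monic_agree (hμ : IsValT v μ) (hν : IsValT v ν) {n : ℕ}
    (hmon : ∀ g : Polynomial K, g.Monic → g.natDegree ≤ n → μ g = ν g) :
    ∀ f : Polynomial K, f.natDegree ≤ n → μ f = ν f := by
  intro f hf
  by_cases hf0 : f = 0
  · rw [hf0, hμ.2.1, hν.2.1]
  obtain ⟨c, g, hc, hgm, hgd, rfl⟩ := scale_monic f hf0
  rw [hμ.2.2.1, hν.2.2.1, hμ.2.2.2.2, hν.2.2.2.2, hmon g hgm (by rw [hgd]; exact hf)]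

theorem mul_pow_agree (hμ : IsValT v μ) (hν : IsValT v ν) {b ψ : Polynomial K}
    (hb : μ b = ν b) (hψ : μ ψ = ν ψ) (s : ℕ) : μ (b * ψ ^ s) = ν (b * ψ ^ s) := by
  induction s with
  | zero => simpa using hb
  | succ s ih => rw [pow_succ, ← mul_assoc, hμ.2.2.1, hν.2.2.1, ih, hψ]

theorem divByMonic_pow_succ {φ : Polynomial K} (hφ : φ.Monic)
    (f : Polynomial K) (s : ℕ) : f /ₘ φ ^ (s + 1) = (f /ₘ φ) /ₘ φ ^ s := by
  have hpow : (φ ^ (s + 1)).Monic := hφ.pow _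
  have hpows : (φ ^ s).Monic := hφ.pow _
  have e1 : (f /ₘ φ) %ₘ φ ^ s + φ ^ s * ((f /ₘ φ) /ₘ φ ^ s) = f /ₘ φ :=
    modByMonic_add_div _ (φ ^ s)
  have e2 : f %ₘ φ + φ * (f /ₘ φ) = f := modByMonic_add_div f φ
  refine (div_modByMonic_unique ((f /ₘ φ) /ₘ φ ^ s)
    (f %ₘ φ + φ * ((f /ₘ φ) %ₘ φ ^ s)) hpow ⟨?_, ?_⟩).1
  · calc f %ₘ φ + φ * ((f /ₘ φ) %ₘ φ ^ s) + φ ^ (s + 1) * ((f /ₘ φ) /ₘ φ ^ s)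
        = f %ₘ φ + φ * ((f /ₘ φ) %ₘ φ ^ s + φ ^ s * ((f /ₘ φ) /ₘ φ ^ s)) := by ring
    _ = f := by rw [e1, e2]
  · have hd1 : degree (f %ₘ φ) < degree (φ ^ (s + 1)) := by
      refine lt_of_lt_of_le (degree_modByMonic_lt f hφ) ?_
      rw [degree_eq_natDegree hφ.ne_zero, degree_eq_natDegree hpow.ne_zero, hφ.natDegree_pow]
      exact_mod_cast Nat.le_mul_of_pos_left _ (Nat.succ_pos s)
    have hd2 : degree (φ * ((f /ₘ φ) %ₘ φ ^ s)) < degree (φ ^ (s + 1)) := by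
      by_cases hz : (f /ₘ φ) %ₘ φ ^ s = 0
      · rw [hz, mul_zero, degree_zero]
        exact bot_lt_iff_ne_bot.mpr fun h => hpow.ne_zero (degree_eq_bot.mp h)
      · rw [degree_mul, pow_succ', degree_mul]
        exact WithBot.add_lt_add_left (by simp [degree_eq_bot, hφ.ne_zero])
          (degree_modByMonic_lt _ hpows)
    exact lt_of_le_of_lt (degree_add_le _ _) (max_lt hd1 hd2)

theorem expCoeff_zero (φ f : Polynomial K) : expCoeff φ f 0 = f %ₘ φ := by
  simp [MLV.expCoeff]

theorem expCoeff_succ {φ : Polynomial K} (hφ : φ.Monic) (f : Polynomial K) (s : ℕ) :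
    expCoeff φ f (s + 1) = expCoeff φ (f /ₘ φ) s := by
  rw [MLV.expCoeff, MLV.expCoeff, divByMonic_pow_succ hφ]

theorem expansion_sum {φ : Polynomial K} (hφ : φ.Monic) (h0 : 0 < φ.natDegree) :
    ∀ (N : ℕ) (f : Polynomial K), f.natDegree ≤ N →
      ∑ s ∈ Finset.range (N + 1), expCoeff φ f s * φ ^ s = f := by
  intro N
  induction N with
  | zero =>
    intro f hf
    rw [Finset.sum_range_one, expCoeff_zero, pow_zero, mul_one]
    refine (modByMonic_eq_self_iff hφ).mpr ?_
    refine lt_of_le_of_lt degree_le_natDegree ?_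
    rw [degree_eq_natDegree hφ.ne_zero]
    exact_mod_cast lt_of_le_of_lt hf h0
  | succ N ih =>
    intro f hf
    have hq : (f /ₘ φ).natDegree ≤ N := by
      rw [natDegree_divByMonic f hφ]
      omega
    rw [Finset.sum_range_succ']
    have hrec : ∀ s, expCoeff φ f (s + 1) * φ ^ (s + 1) =
        expCoeff φ (f /ₘ φ) s * φ ^ s * φ := by
      intro s
      rw [expCoeff_succ hφ, pow_succ]
      ring
    rw [Finset.sum_congr rfl fun s _ => hrec s, ← Finset.sum_mul, ih (f /ₘ φ) hq,
      expCoeff_zero, pow_zero, mul_one]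
    linear_combination modByMonic_add_div f φ

theorem claimA (hμ : IsValT v μ) {φ : Polynomial K} (hmon : φ.Monic)
    (hmin : IsMuMinimal μ φ) (f : Polynomial K) : μ f ≤ μ (f %ₘ φ) := by
  by_contra hlt
  push_neg at hlt
  have hr0 : f %ₘ φ ≠ 0 := by
    intro h
    rw [h, hμ.2.1] at hlt
    exact not_top_lt hlt
  refine hmin.2 (f %ₘ φ) hr0 (degree_modByMonic_lt f hmon) ⟨-(f /ₘ φ), ?_⟩
  show μ (f %ₘ φ) < μ (f %ₘ φ - -(f /ₘ φ) * φ)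
  have e : f %ₘ φ - -(f /ₘ φ) * φ = f := by
    linear_combination modByMonic_add_div f φ
  rw [e]
  exact hlt

theorem claimA' (hμ : IsValT v μ) {φ : Polynomial K} (hmon : φ.Monic)
    (hmin : IsMuMinimal μ φ) (f : Polynomial K) : μ f ≤ μ (φ * (f /ₘ φ)) := by
  by_contra hlt
  push_neg at hlt
  have key : μ (f %ₘ φ) < μ f := by
    rcases lt_or_ge (μ (f %ₘ φ)) (μ f) with h | h
    · exact h
    exfalso
    have h2 : min (μ f) (μ (f %ₘ φ)) ≤ μ (φ * (f /ₘ φ)) := by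
      have e : φ * (f /ₘ φ) = f - f %ₘ φ := by
        linear_combination modByMonic_add_div f φ
      rw [e]
      exact vt_sub_ge hμ _ _
    rw [min_eq_left (le_trans h (le_refl _))] at h2
    · exact absurd h2 (not_le.mpr hlt)
  have hr0 : f %ₘ φ ≠ 0 := by
    intro h
    rw [h, hμ.2.1] at key
    exact not_top_lt key
  refine hmin.2 (f %ₘ φ) hr0 (degree_modByMonic_lt f hmon) ⟨-(f /ₘ φ), ?_⟩
  show μ (f %ₘ φ) < μ (f %ₘ φ - -(f /ₘ φ) * φ)
  have e : f %ₘ φ - -(f /ₘ φ) * φ = f := by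
    linear_combination modByMonic_add_div f φ
  rw [e]
  exact key

theorem expansion_le (hμ : IsValT v μ) {φ : Polynomial K} (hmon : φ.Monic)
    (hmin : IsMuMinimal μ φ) :
    ∀ (s : ℕ) (f : Polynomial K), μ f ≤ μ (expCoeff φ f s * φ ^ s) := by
  intro s
  induction s with
  | zero =>
    intro f
    rw [expCoeff_zero, pow_zero, mul_one]
    exact claimA hμ hmon hmin f
  | succ s ih =>
    intro f
    rw [expCoeff_succ hmon, pow_succ, ← mul_assoc, hμ.2.2.1]
    have h1 : μ (expCoeff φ (f /ₘ φ) s * φ ^ s) + μ φ ≥ μ (f /ₘ φ) + μ φ :=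
      add_le_add_left (ih _) _
    refine le_trans ?_ h1
    rw [← hμ.2.2.1, mul_comm]
    exact claimA' hμ hmon hmin f

theorem mod_val (hμ : IsValT v μ) {φ : Polynomial K} (hmon : φ.Monic)
    (hmin : IsMuMinimal μ φ) {f : Polynomial K} (hnd : ¬ MuDvd μ φ f) (htop : μ f ≠ ⊤) :
    μ (f %ₘ φ) = μ f ∧ f %ₘ φ ≠ 0 := by
  have hle := claimA hμ hmon hmin f
  have heq : μ (f %ₘ φ) = μ f := by
    rcases eq_or_lt_of_le hle with h | h
    · exact h.symm
    exfalso
    apply hnd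
    refine ⟨f /ₘ φ, ?_⟩
    show μ f < μ (f - f /ₘ φ * φ)
    have e : f - f /ₘ φ * φ = f %ₘ φ := by
      linear_combination -modByMonic_add_div f φ
    rw [e]
    exact h
  refine ⟨heq, fun h => ?_⟩
  rw [h, hμ.2.1] at heq
  exact htop heq.symm

theorem exists_minKey (hinn : IsInnerNode μ) :
    ∃ φ : Polynomial K, IsKeyPol μ φ ∧ φ.natDegree = degOf μ := by
  obtain ⟨φ₀, h₀⟩ := hinn
  have hne : {n : ℕ | ∃ φ : Polynomial K, IsKeyPol μ φ ∧ φ.natDegree = n}.Nonempty :=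
    ⟨φ₀.natDegree, φ₀, h₀, rfl⟩
  obtain ⟨φ, hφ, hd⟩ := Nat.sInf_mem hne
  exact ⟨φ, hφ, hd⟩

theorem exists_low_increase (hμ : IsValT v μ) (hν : IsValT v ν)
    (hle : ∀ f, μ f ≤ ν f) {ψ : Polynomial K} (hψ : IsKeyPol ν ψ)
    {f₀ : Polynomial K} (hf₀ : μ f₀ < ν f₀) :
    ∃ g : Polynomial K, g.Monic ∧ g.natDegree ≤ ψ.natDegree ∧ μ g < ν g := by
  by_contra hcon
  push_neg at hcon
  have hagree : ∀ g : Polynomial K, g.natDegree ≤ ψ.natDegree → μ g = ν g :=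
    agree_of_monic_agree hμ hν (fun g hg hd => le_antisymm (hle g) (hcon g hg hd))
  obtain ⟨χ, hχmon, hχdeg, hχlt⟩ := scale_lt hμ hν hf₀
  have hψmon := hψ.1
  have hψ0 : 0 < ψ.natDegree := hψ.2.1.1
  have hsum := expansion_sum hψmon hψ0 χ.natDegree χ le_rfl
  have hbound : ∀ s ∈ Finset.range (χ.natDegree + 1), ν χ ≤ μ (expCoeff ψ χ s * ψ ^ s) := by
    intro s _
    have h1 : ν χ ≤ ν (expCoeff ψ χ s * ψ ^ s) := expansion_le hν hψmon hψ.2.1 s χ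
    have hbs : μ (expCoeff ψ χ s) = ν (expCoeff ψ χ s) := by
      apply hagree
      by_cases h : expCoeff ψ χ s = 0
      · simp [h]
      · exact le_of_lt (natDegree_lt_natDegree h
          (degree_modByMonic_lt (χ /ₘ ψ ^ s) hψmon))
    have hmul : μ (expCoeff ψ χ s * ψ ^ s) = ν (expCoeff ψ χ s * ψ ^ s) :=
      mul_pow_agree hμ hν hbs (hagree ψ le_rfl) s
    rw [hmul]
    exact h1
  have hfin : ν χ ≤ μ χ := by
    calc ν χ ≤ μ (∑ s ∈ Finset.range (χ.natDegree + 1), expCoeff ψ χ s * ψ ^ s) :=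
      vt_sum hμ hbound
    _ = μ χ := by rw [hsum]
  exact absurd hχlt (not_lt.mpr hfin)

theorem tangent_exists (hμ : IsValT v μ) (hν : IsValT v ν) (hle : ∀ f, μ f ≤ ν f)
    (hne : ∃ f, μ f < ν f) :
    ∃ χ : Polynomial K, IsKeyPol μ χ ∧ μ χ < ν χ ∧
      (∀ g : Polynomial K, g.Monic → μ g < ν g → χ.natDegree ≤ g.natDegree) ∧
      (∀ f : Polynomial K, MuDvd μ χ f → μ f < ν f) := by
  classical
  have hDne : {n : ℕ | ∃ g : Polynomial K, g.Monic ∧ g.natDegree = n ∧ μ g < ν g}.Nonempty := by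
    obtain ⟨f, hf⟩ := hne
    obtain ⟨g, hgm, hgd, hglt⟩ := scale_lt hμ hν hf
    exact ⟨g.natDegree, g, hgm, rfl, hglt⟩
  obtain ⟨χ, hχmon, hχdeg, hχlt⟩ := Nat.sInf_mem hDne
  have hminD : ∀ g : Polynomial K, g.Monic → μ g < ν g → χ.natDegree ≤ g.natDegree := by
    intro g hg hlt'
    rw [hχdeg]
    exact Nat.sInf_le ⟨g, hg, rfl, hlt'⟩
  have hP1 : ∀ g : Polynomial K, g.natDegree < χ.natDegree → μ g = ν g := by
    intro g hg
    by_cases hg0 : g = 0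
    · rw [hg0, hμ.2.1, hν.2.1]
    by_contra hne2
    have hlt2 : μ g < ν g := lt_of_le_of_ne (hle g) hne2
    obtain ⟨h, hhm, hhd, hhlt⟩ := scale_lt hμ hν hlt2
    have := hminD h hhm hhlt
    omega
  have hdvd_lt : ∀ f : Polynomial K, MuDvd μ χ f → μ f < ν f := by
    rintro f ⟨q, hq⟩
    replace hq : μ f < μ (f - q * χ) := hq
    have hfin : μ f ≠ ⊤ := ne_top_of_lt hq
    have hqχ : μ (q * χ) = μ f := by
      have h1 : μ f ≤ μ (q * χ) := by
        have e : q * χ = f - (f - q * χ) := by ring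
        rw [e]
        have h2 := vt_sub_ge hμ f (f - q * χ)
        rwa [min_eq_left hq.le] at h2
      rcases eq_or_lt_of_le h1 with h | h
      · exact h.symm
      exfalso
      have h2 : min (μ (q * χ)) (μ (f - q * χ)) ≤ μ f := by
        have e : q * χ + (f - q * χ) = f := by ring
        calc min (μ (q * χ)) (μ (f - q * χ)) ≤ μ (q * χ + (f - q * χ)) := hμ.2.2.2.1 _ _
        _ = μ f := by rw [e]
      exact absurd h2 (not_le.mpr (lt_min h hq))
    have hμq : μ q ≠ ⊤ := by
      intro h
      rw [hμ.2.2.1, h, top_add] at hqχ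
      exact hfin hqχ.symm
    have hν1 : μ f < ν (q * χ) := by
      rw [hν.2.2.1]
      calc μ f = μ q + μ χ := by rw [← hμ.2.2.1, hqχ]
      _ < μ q + ν χ := WithTop.add_lt_add_left hμq hχlt
      _ ≤ ν q + ν χ := add_le_add_left (hle q) _
    have hν2 : μ f < ν (f - q * χ) := lt_of_lt_of_le hq (hle _)
    have h3 : min (ν (q * χ)) (ν (f - q * χ)) ≤ ν f := by
      have e : q * χ + (f - q * χ) = f := by ring
      calc min (ν (q * χ)) (ν (f - q * χ)) ≤ ν (q * χ + (f - q * χ)) := hν.2.2.2.1 _ _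
      _ = ν f := by rw [e]
    exact lt_of_lt_of_le (lt_min hν1 hν2) h3
  have hlt_dvd : ∀ f : Polynomial K, μ f < ν f → MuDvd μ χ f := by
    intro f hf
    have hfin : μ f ≠ ⊤ := ne_top_of_lt hf
    refine ⟨f /ₘ χ, ?_⟩
    show μ f < μ (f - f /ₘ χ * χ)
    have hfr : f - f /ₘ χ * χ = f %ₘ χ := by
      linear_combination -modByMonic_add_div f χ
    rw [hfr]
    by_contra hcon
    push_neg at hcon
    have hr0 : f %ₘ χ ≠ 0 := by
      intro h
      rw [h, hμ.2.1] at hcon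
      exact hfin (top_le_iff.mp hcon)
    have hrdeg : (f %ₘ χ).natDegree < χ.natDegree :=
      natDegree_lt_natDegree hr0 (degree_modByMonic_lt f hχmon)
    have hrag : μ (f %ₘ χ) = ν (f %ₘ χ) := hP1 _ hrdeg
    have hrf : f %ₘ χ = f - χ * (f /ₘ χ) := by
      linear_combination modByMonic_add_div f χ
    have hνr_lt : ν (f %ₘ χ) < ν f := by
      rw [← hrag]
      exact lt_of_le_of_lt hcon hf
    have hνχq : ν (χ * (f /ₘ χ)) ≤ ν (f %ₘ χ) := by
      rcases le_or_gt (ν (χ * (f /ₘ χ))) (ν (f %ₘ χ)) with h | h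
      · exact h
      exfalso
      have h2 : min (ν f) (ν (χ * (f /ₘ χ))) ≤ ν (f %ₘ χ) := by
        rw [hrf]
        exact vt_sub_ge hν _ _
      exact absurd h2 (not_le.mpr (lt_min hνr_lt h))
    have hνrtop : ν (f %ₘ χ) ≠ ⊤ := by
      intro h
      rw [hrag, h] at hcon
      exact hfin (top_le_iff.mp hcon)
    have hνq : ν (f /ₘ χ) ≠ ⊤ := by
      intro h
      rw [hν.2.2.1, h, add_top] at hνχq
      exact hνrtop (top_le_iff.mp hνχq)
    have hμχq_lt : μ (χ * (f /ₘ χ)) < ν (χ * (f /ₘ χ)) := by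
      rw [hμ.2.2.1, hν.2.2.1]
      calc μ χ + μ (f /ₘ χ) ≤ μ χ + ν (f /ₘ χ) := add_le_add_right (hle _) _
      _ < ν χ + ν (f /ₘ χ) := WithTop.add_lt_add_right hνq hχlt
    have hchain : μ (χ * (f /ₘ χ)) < μ (f %ₘ χ) := by
      rw [hrag]
      exact lt_of_lt_of_le hμχq_lt hνχq
    have h4 : min (μ f) (μ (f %ₘ χ)) ≤ μ (χ * (f /ₘ χ)) := by
      have e : χ * (f /ₘ χ) = f - f %ₘ χ := by
        linear_combination modByMonic_add_div f χ
      rw [e]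
      exact vt_sub_ge hμ _ _
    rw [min_eq_right hcon] at h4
    exact absurd h4 (not_le.mpr hchain)
  have hχnd : 0 < χ.natDegree := by
    rcases Nat.eq_zero_or_pos χ.natDegree with h | h
    · exfalso
      have h1 : χ = 1 := hχmon.natDegree_eq_zero.mp h
      rw [h1, hμ.1, hν.1] at hχlt
      exact lt_irrefl _ hχlt
    · exact h
  have hkey : IsKeyPol μ χ := by
    refine ⟨hχmon, ⟨hχnd, ?_⟩, ⟨ne_top_of_lt hχlt, ?_, ?_⟩⟩
    · intro f hf0 hdeg hdvd
      have h1 := hdvd_lt f hdvd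
      have h2 : μ f = ν f := hP1 f (natDegree_lt_natDegree hf0 hdeg)
      rw [h2] at h1
      exact lt_irrefl _ h1
    · rintro ⟨f, hf⟩
      replace hf : μ (f * χ) < μ (f * χ - 1) := hf
      have h1 : μ (f * χ) ≤ 0 := by
        have e : f * χ - (f * χ - 1) = 1 := by ring
        have h2 := vt_sub_ge hμ (f * χ) (f * χ - 1)
        rw [e, hμ.1, min_eq_left hf.le] at h2
        exact h2
      have h2 : (0 : WithTop Λ) < μ (f * χ - 1) := by
        by_contra hc
        push_neg at hc
        have e : (1 : Polynomial K) + (f * χ - 1) = f * χ := by ring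
        have h3 := hμ.2.2.2.1 (1 : Polynomial K) (f * χ - 1)
        rw [e, hμ.1, min_eq_right hc] at h3
        exact absurd hf (not_lt.mpr h3)
      have h3 : μ (f * χ) = 0 := by
        refine le_antisymm h1 ?_
        have e : (1 : Polynomial K) + (f * χ - 1) = f * χ := by ring
        have h4 := hμ.2.2.2.1 (1 : Polynomial K) (f * χ - 1)
        rw [e, hμ.1, min_eq_left h2.le] at h4
        exact h4
      have hdvd1 : MuDvd μ χ 1 := by
        refine ⟨f, ?_⟩
        show μ 1 < μ (1 - f * χ)
        have e : (1 : Polynomial K) - f * χ = -(f * χ - 1) := by ring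
        rw [hμ.1, e, vt_neg hμ]
        exact h2
      have h5 := hdvd_lt 1 hdvd1
      rw [hμ.1, hν.1] at h5
      exact lt_irrefl _ h5
    · intro f h hdvd
      have hlt := hdvd_lt _ hdvd
      have hfin : μ (f * h) ≠ ⊤ := ne_top_of_lt hlt
      rw [hμ.2.2.1] at hfin
      obtain ⟨hft, hht⟩ := WithTop.add_ne_top.mp hfin
      by_cases hflt : μ f < ν f
      · exact Or.inl (hlt_dvd f hflt)
      right
      apply hlt_dvd
      have hfeq : μ f = ν f := le_antisymm (hle f) (not_lt.mp hflt)
      rcases lt_or_ge (μ h) (ν h) with h' | h'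
      · exact h'
      exfalso
      have h6 : ν f + ν h ≤ μ f + μ h := by
        rw [← hfeq]
        exact add_le_add_right h' _
      rw [hμ.2.2.1, hν.2.2.1] at hlt
      exact absurd hlt (not_lt.mpr h6)
  exact ⟨χ, hkey, hχlt, hminD, hdvd_lt⟩

theorem low_agree (hμ : IsValT v μ) (hν : IsValT v ν) (hle : ∀ f, μ f ≤ ν f)
    {f : Polynomial K} (hdeg : f.natDegree < degOf μ) : μ f = ν f := by
  by_contra hne
  have hflt : μ f < ν f := lt_of_le_of_ne (hle f) hne
  obtain ⟨χ, hkey, hχlt, hminD, _⟩ := tangent_exists hμ hν hle ⟨f, hflt⟩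
  have h1 : degOf μ ≤ χ.natDegree := Nat.sInf_le ⟨χ, hkey, rfl⟩
  obtain ⟨g, hgm, hgd, hglt⟩ := scale_lt hμ hν hflt
  have h2 := hminD g hgm hglt
  omega

theorem key_irreducible_poly (hμ : IsValT v μ) {φ : Polynomial K} (hφk : IsKeyPol μ φ) :
    Irreducible φ := by
  obtain ⟨hmon, hmin, hirr⟩ := hφk
  have hself : MuDvd μ φ φ := by
    refine ⟨1, ?_⟩
    show μ φ < μ (φ - 1 * φ)
    have e : φ - 1 * φ = 0 := by ring
    rw [e, hμ.2.1]
    exact lt_top_iff_ne_top.mpr hirr.1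
  constructor
  · exact Polynomial.not_isUnit_of_natDegree_pos φ hmin.1
  · intro f g hfg
    by_contra hcon
    push_neg at hcon
    obtain ⟨hfu, hgu⟩ := hcon
    have hφ0 : φ ≠ 0 := hmon.ne_zero
    have hf0 : f ≠ 0 := fun h => hφ0 (by rw [hfg, h, zero_mul])
    have hg0 : g ≠ 0 := fun h => hφ0 (by rw [hfg, h, mul_zero])
    have unit_of_deg0 : ∀ p : Polynomial K, p ≠ 0 → p.natDegree = 0 → IsUnit p := by
      intro p hp h0
      have hpc : p = Polynomial.C (p.coeff 0) := eq_C_of_natDegree_eq_zero h0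
      rw [hpc]
      refine isUnit_C.mpr (isUnit_iff_ne_zero.mpr ?_)
      intro hc0
      apply hp
      rw [hpc, hc0, map_zero]
    have hfd : 0 < f.natDegree := by
      rcases Nat.eq_zero_or_pos f.natDegree with h | h
      · exact absurd (unit_of_deg0 f hf0 h) hfu
      · exact h
    have hgd : 0 < g.natDegree := by
      rcases Nat.eq_zero_or_pos g.natDegree with h | h
      · exact absurd (unit_of_deg0 g hg0 h) hgu
      · exact h
    have hdeg : f.natDegree + g.natDegree = φ.natDegree := by
      rw [hfg, natDegree_mul hf0 hg0]
    have hfs : f.degree < φ.degree := by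
      rw [degree_eq_natDegree hf0, degree_eq_natDegree hφ0]
      have : f.natDegree < φ.natDegree := by omega
      exact_mod_cast this
    have hgs : g.degree < φ.degree := by
      rw [degree_eq_natDegree hg0, degree_eq_natDegree hφ0]
      have : g.natDegree < φ.natDegree := by omega
      exact_mod_cast this
    rcases hirr.2.2 f g (hfg ▸ hself) with h | h
    · exact hmin.2 f hf0 hfs h
    · exact hmin.2 g hg0 hgs h

theorem degZero_subgroup (hμ : IsValT v μ) (hinn : IsInnerNode μ) :
    ∃ G : AddSubgroup Λ, (G : Set Λ) = degZeroSet μ := by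
  obtain ⟨φ, hφkey, hφdeg⟩ := exists_minKey hinn
  have hmon := hφkey.1
  have hmin := hφkey.2.1
  have hirr := hφkey.2.2
  have hd0 : 0 < degOf μ := hφdeg ▸ hmin.1
  have hdeg_lt : ∀ g : Polynomial K, g ≠ 0 → g.natDegree < degOf μ → g.degree < φ.degree := by
    intro g hg hgd
    rw [degree_eq_natDegree hg, degree_eq_natDegree hmon.ne_zero]
    have : g.natDegree < φ.natDegree := by omega
    exact_mod_cast this
  have hzero : (0 : Λ) ∈ degZeroSet μ :=
    ⟨1, one_ne_zero, by simpa [natDegree_one] using hd0, by rw [hμ.1, WithTop.coe_zero]⟩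
  have hadd : ∀ {δ₁ δ₂ : Λ}, δ₁ ∈ degZeroSet μ → δ₂ ∈ degZeroSet μ →
      δ₁ + δ₂ ∈ degZeroSet μ := by
    rintro δ₁ δ₂ ⟨a, ha0, hadeg, haval⟩ ⟨b, hb0, hbdeg, hbval⟩
    have hab : μ (a * b) = ((δ₁ + δ₂ : Λ) : WithTop Λ) := by
      rw [hμ.2.2.1, haval, hbval]
      exact (WithTop.coe_add _ _).symm
    have hndvd : ¬ MuDvd μ φ (a * b) := by
      intro h
      rcases hirr.2.2 a b h with h' | h'
      · exact hmin.2 a ha0 (hdeg_lt a ha0 hadeg) h'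
      · exact hmin.2 b hb0 (hdeg_lt b hb0 hbdeg) h'
    obtain ⟨hval, hne⟩ := mod_val hμ hmon hmin hndvd (by rw [hab]; exact WithTop.coe_ne_top)
    refine ⟨(a * b) %ₘ φ, hne, ?_, by rw [hval, hab]⟩
    have h2 := natDegree_lt_natDegree hne (degree_modByMonic_lt (a * b) hmon)
    omega
  have hneg : ∀ {δ : Λ}, δ ∈ degZeroSet μ → -δ ∈ degZeroSet μ := by
    rintro δ ⟨a, ha0, hadeg, haval⟩
    have hirr_poly : Irreducible φ := key_irreducible_poly hμ ⟨hmon, hmin, hirr⟩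
    have hnd : ¬ (φ ∣ a) := by
      intro h
      exact absurd (degree_le_of_dvd h ha0) (not_le.mpr (hdeg_lt a ha0 hadeg))
    have hcop : IsCoprime φ a := hirr_poly.coprime_iff_not_dvd.mpr hnd
    obtain ⟨x, y, hxy⟩ := hcop
    set u := y %ₘ φ with hu
    set w := x + (y /ₘ φ) * a with hw
    have hbez : w * φ + u * a = 1 := by
      have h := modByMonic_add_div y φ
      rw [hw, hu]
      linear_combination hxy + a * h
    have hu0 : u ≠ 0 := by
      intro h
      rw [h, zero_mul, add_zero] at hbez
      have : IsUnit φ := isUnit_of_dvd_one ⟨w, by rw [← hbez]; ring⟩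
      exact Polynomial.not_isUnit_of_natDegree_pos φ hmin.1 this
    have hudeg : u.natDegree < degOf μ := by
      have := natDegree_lt_natDegree hu0 (degree_modByMonic_lt y hmon)
      omega
    have hmin_bez : min (μ (w * φ)) (μ (u * a)) ≤ 0 := by
      have h := hμ.2.2.2.1 (w * φ) (u * a)
      rwa [hbez, hμ.1] at h
    have hAne : μ (u * a) ≠ 0 → False := by
      intro hA0
      rcases lt_trichotomy (μ (u * a)) (μ (w * φ)) with hAB | hAB | hAB
      · -- μ (u*a + w*φ) = μ (u*a) = 0, contradiction with hA0
        have e : u * a + w * φ = 1 := by linear_combination hbez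
        have h0 := vt_add_eq hμ hAB
        rw [e, hμ.1] at h0
        exact hA0 h0.symm
      · -- equal: then both ≤ 0, and ≠ 0 so < 0 : μ-divisibility contradiction
        rw [← hAB, min_self] at hmin_bez
        have hAlt : μ (u * a) < 0 := lt_of_le_of_ne hmin_bez hA0
        have hdvdua : MuDvd μ φ (u * a) := by
          refine ⟨-w, ?_⟩
          show μ (u * a) < μ (u * a - -w * φ)
          have e : u * a - -w * φ = 1 := by linear_combination hbez
          rw [e, hμ.1]
          exact hAlt
        rcases hirr.2.2 u a hdvdua with h' | h'
        · exact hmin.2 u hu0 (hdeg_lt u hu0 hudeg) h'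
        · exact hmin.2 a ha0 (hdeg_lt a ha0 hadeg) h'
      · -- μ (w*φ) < μ (u*a) : w*φ ∼ 1, contradicting irreducibility
        have hequiv : MuEquiv μ (w * φ) 1 := by
          show μ (w * φ) < μ (w * φ - 1)
          have e : w * φ - 1 = -(u * a) := by linear_combination hbez
          rw [e, vt_neg hμ]
          exact hAB
        exact hirr.2.1 ⟨w, hequiv⟩
    have hA0 : μ (u * a) = 0 := by
      by_contra h
      exact hAne h
    have hut : μ u ≠ ⊤ := by
      intro h
      rw [hμ.2.2.1, h, top_add] at hA0
      simp at hA0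
    obtain ⟨lu, hlu⟩ := WithTop.ne_top_iff_exists.mp hut
    have hlu_eq : lu + δ = 0 := by
      rw [hμ.2.2.1, ← hlu, haval] at hA0
      exact_mod_cast hA0
    refine ⟨u, hu0, hudeg, ?_⟩
    rw [← hlu, eq_neg_of_add_eq_zero_left hlu_eq]
  exact ⟨⟨⟨⟨degZeroSet μ, fun h1 h2 => hadd h1 h2⟩, hzero⟩, fun h => hneg h⟩, rfl⟩

end Aux

/-- For a continuous family `C` of stable degree `m`, `Γ_{ρ_i}^0 = Γ_C` for every `i`
with `deg(ρ_i) = m`; in particular the stable group `Γ_C` is a subgroup of `Λ`. -/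
theorem statement_9 {K : Type*} [Field K] {Λ : Type*} [AddCommGroup Λ] [LinearOrder Λ] [IsOrderedAddMonoid Λ] {ι : Type*} [LinearOrder ι] [Nonempty ι]
    (v : FieldVal K Λ) (ρ : ι → Polynomial K → WithTop Λ)
    (hTO : IsTOFamily v ρ) (m : ℕ) (hm : HasStableDeg ρ m) :
    (∀ i : ι, degOf (ρ i) = m → degZeroSet (ρ i) = stableSet ρ) ∧
    ∃ G : AddSubgroup Λ, (G : Set Λ) = stableSet ρ := by
  obtain ⟨hval, hinner, hsm, hnomax⟩ := hTO
  obtain ⟨i₀, hi₀⟩ := hm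
  have part1 : ∀ i : ι, degOf (ρ i) = m → degZeroSet (ρ i) = stableSet ρ := by
    intro i hi
    apply Set.eq_of_subset_of_subset
    · rintro δ ⟨a, ha0, hadeg, haval⟩
      refine ⟨a, ha0, i, fun j hij => ?_⟩
      have hle : ∀ f, ρ i f ≤ ρ j f := fun f => (hsm.monotone hij) f
      rw [← low_agree (hval i) (hval j) hle hadeg]
      exact haval
    · rintro δ ⟨f, hf0, i₁, hstab⟩
      set j := max i (max i₀ i₁) with hj
      obtain ⟨j', hjj'⟩ := hnomax j
      have hij : i ≤ j := le_max_left _ _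
      have hi₀j : i₀ ≤ j := le_trans (le_max_left _ _) (le_max_right _ _)
      have hi₁j : i₁ ≤ j := le_trans (le_max_right _ _) (le_max_right _ _)
      have hle : ∀ g, ρ j g ≤ ρ j' g := fun g => (hsm.monotone hjj'.le) g
      have hfj : ρ j f = (δ : WithTop Λ) := hstab j hi₁j
      have hfj' : ρ j' f = (δ : WithTop Λ) := hstab j' (le_trans hi₁j hjj'.le)
      have hnelt : ∃ g, ρ j g < ρ j' g := by
        have hne' : ρ j ≠ ρ j' := (hsm hjj').ne
        obtain ⟨g, hg⟩ := Function.ne_iff.mp hne'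
        exact ⟨g, lt_of_le_of_ne (hle g) hg⟩
      obtain ⟨χ, hχkey, hχlt, hχmin, hχdvdlt⟩ := tangent_exists (hval j) (hval j') hle hnelt
      obtain ⟨ψ, hψkey, hψdeg⟩ := exists_minKey (hinner j')
      have hψm : ψ.natDegree = m := by rw [hψdeg, hi₀ j' (le_trans hi₀j hjj'.le)]
      obtain ⟨g₀, hg₀⟩ := hnelt
      obtain ⟨g, hgmon, hgdeg, hglt⟩ :=
        exists_low_increase (hval j) (hval j') hle hψkey hg₀
      have hχm : χ.natDegree ≤ m := le_trans (hχmin g hgmon hglt) (by omega)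
      have hndvd : ¬ MuDvd (ρ j) χ f := by
        intro h
        have := hχdvdlt f h
        rw [hfj, hfj'] at this
        exact lt_irrefl _ this
      obtain ⟨hmval, hmne⟩ := mod_val (hval j) hχkey.1 hχkey.2.1 hndvd
        (by rw [hfj]; exact WithTop.coe_ne_top)
      have hadeg : (f %ₘ χ).natDegree < m :=
        lt_of_lt_of_le (natDegree_lt_natDegree hmne (degree_modByMonic_lt f hχkey.1)) hχm
      have haj : ρ j (f %ₘ χ) = (δ : WithTop Λ) := by rw [hmval, hfj]
      have hlei : ∀ g, ρ i g ≤ ρ j g := fun g => (hsm.monotone hij) g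
      have hfin : ρ i (f %ₘ χ) = ρ j (f %ₘ χ) :=
        low_agree (hval i) (hval j) hlei (by rw [hi]; exact hadeg)
      exact ⟨f %ₘ χ, hmne, by rw [hi]; exact hadeg, by rw [hfin, haj]⟩
  refine ⟨part1, ?_⟩
  obtain ⟨G, hG⟩ := degZero_subgroup (hval i₀) (hinner i₀)
  exact ⟨G, by rw [hG, part1 i₀ (hi₀ i₀ le_rfl)]⟩
end

section
/- Let C be an essential continuous family in T and let φ ∈ KP_∞(C). Then KP_∞(C) = {φ + a : a ∈ K[x], deg(a) < m_∞(C), and ρ_C(a) > ρ_i(φ) for all i ∈ A}. -/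
open Polynomial

open MLV

section Aux

variable {K : Type*} [Field K] {Λ : Type*} [AddCommGroup Λ] [LinearOrder Λ] [IsOrderedAddMonoid Λ]

lemma aux_neg {v : FieldVal K Λ} {μ : Polynomial K → WithTop Λ} (h : IsValT v μ)
    (g : Polynomial K) : μ (-g) = μ g := by
  obtain ⟨h1, h0, hmul, hadd, hC⟩ := h
  have hv1 : v.v (-1) + v.v (-1) = 0 := by
    rw [← v.map_mul']; norm_num [v.map_one']
  have hv0 : v.v (-1) = 0 := by
    cases' hx : v.v (-1) with y
    · rw [hx] at hv1; simp at hv1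
    · rw [hx] at hv1
      have hy : y + y = 0 := by exact_mod_cast hv1
      have : y = 0 := by
        rcases lt_trichotomy y 0 with h | h | h
        · exact absurd hy (ne_of_lt (add_neg h h))
        · exact h
        · exact absurd hy (ne_of_gt (add_pos h h))
      simp [this]
  have hg : -g = Polynomial.C (-1) * g := by
    rw [Polynomial.C_neg, Polynomial.C_1, neg_one_mul]
  rw [hg, hmul, hC, hv0, zero_add]

lemma aux_add_lt {v : FieldVal K Λ} {μ : Polynomial K → WithTop Λ} (h : IsValT v μ)
    {f g : Polynomial K} (hlt : μ f < μ g) : μ (f + g) = μ f := by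
  have hneg := aux_neg h g
  obtain ⟨h1, h0, hmul, hadd, hC⟩ := h
  refine le_antisymm ?_ ?_
  · have h2 := hadd (f + g) (-g)
    rw [add_neg_cancel_right, hneg] at h2
    by_contra hc
    push_neg at hc
    exact absurd h2 (not_le.mpr (lt_min hc hlt))
  · calc μ f = min (μ f) (μ g) := (min_eq_left hlt.le).symm
      _ ≤ μ (f + g) := hadd f g

end Aux

/-- For an essential continuous family `C` and `φ ∈ KP_∞(C)`,
`KP_∞(C) = {φ + a : deg a < m_∞(C), ρ_C(a) > ρ_i(φ) for all i}`. -/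
theorem statement_10 {K : Type*} [Field K] {Λ : Type*} [AddCommGroup Λ] [LinearOrder Λ] [IsOrderedAddMonoid Λ] {ι : Type*} [LinearOrder ι] [Nonempty ι]
    (v : FieldVal K Λ) (ρ : ι → Polynomial K → WithTop Λ)
    (hE : IsEssential v ρ) (φ : Polynomial K) (hφ : IsLimKeyPol ρ φ) :
    {ψ : Polynomial K | IsLimKeyPol ρ ψ} =
      {ψ : Polynomial K | ∃ a : Polynomial K, ψ = φ + a ∧ a.natDegree < φ.natDegree ∧
        ∃ β : WithTop Λ, IsStableVal ρ a β ∧ ∀ i : ι, ρ i φ < β} := by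
  obtain ⟨⟨hval, hinner, hsm, hnomax⟩, m, hm, φ₀, hφ₀, hmlt⟩ := hE
  have hmono : ∀ {i j : ι}, i ≤ j → ∀ f, ρ i f ≤ ρ j f := by
    intro i j hij f
    exact (hsm.monotone hij) f
  obtain ⟨hφmonic, hφuns, hφmin⟩ := hφ
  -- cofinal strict increase for unstable polynomials
  have hcof : ∀ (f : Polynomial K), ¬ IsStablePoly ρ f → ∀ i : ι,
      ∃ j : ι, i ≤ j ∧ ρ i f < ρ j f := by
    intro f hf i
    rw [IsStablePoly] at hf
    push_neg at hf
    obtain ⟨j, hij, hne⟩ := hf i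
    exact ⟨j, hij, lt_of_le_of_ne (hmono hij f) hne.symm⟩
  -- φ is nonconstant
  have hφdeg : 0 < φ.natDegree := by
    by_contra hc
    push_neg at hc
    have hφ1 : φ = 1 := hφmonic.natDegree_eq_zero.mp (Nat.le_zero.mp hc)
    refine hφuns ⟨Classical.arbitrary ι, fun j _ => ?_⟩
    rw [hφ1, (hval j).1, (hval (Classical.arbitrary ι)).1]
  ext ψ
  simp only [Set.mem_setOf_eq]
  constructor
  · rintro ⟨hψmonic, hψuns, hψmin⟩
    have hdeq : ψ.natDegree = φ.natDegree :=
      le_antisymm (hψmin φ hφuns) (hφmin ψ hψuns)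
    set a : Polynomial K := ψ - φ with ha
    have hψeq : ψ = φ + a := by ring
    have hadeg : a.natDegree < φ.natDegree := by
      by_cases h0 : a = 0
      · rw [h0]; simpa using hφdeg
      · have hdeg : ψ.degree = φ.degree := by
          rw [Polynomial.degree_eq_natDegree hψmonic.ne_zero,
            Polynomial.degree_eq_natDegree hφmonic.ne_zero, hdeq]
        have := Polynomial.degree_sub_lt hdeg hψmonic.ne_zero
          (by rw [hψmonic.leadingCoeff, hφmonic.leadingCoeff])
        rw [hdeg] at this
        exact Polynomial.natDegree_lt_natDegree h0 this
    have hastab : IsStablePoly ρ a := by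
      by_contra hc
      exact absurd (hφmin a hc) (not_le.mpr hadeg)
    obtain ⟨i₀, hi₀⟩ := hastab
    refine ⟨a, hψeq, hadeg, ρ i₀ a, ⟨i₀, hi₀⟩, ?_⟩
    set β := ρ i₀ a with hβ
    by_contra hc
    push_neg at hc
    obtain ⟨i₁, hi₁⟩ := hc
    obtain ⟨j₁, hij₁, hlt₁⟩ := hcof φ hφuns i₁
    refine hψuns ⟨max j₁ i₀, fun j hj => ?_⟩
    have hstep : ∀ k : ι, max j₁ i₀ ≤ k → ρ k ψ = β := by
      intro k hk
      have hka : ρ k a = β := hi₀ k (le_trans (le_max_right _ _) hk)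
      have hkφ : β < ρ k φ :=
        lt_of_le_of_lt hi₁ (lt_of_lt_of_le hlt₁
          (hmono (le_trans (le_max_left _ _) hk) φ))
      have := aux_add_lt (hval k) (f := a) (g := φ) (by rw [hka]; exact hkφ)
      rw [add_comm] at this
      rw [hψeq, this, hka]
    rw [hstep j hj, hstep (max j₁ i₀) le_rfl]
  · rintro ⟨a, hψeq, hadeg, β, ⟨i₀, hi₀⟩, hβlt⟩
    have hψdeg : ψ.natDegree = φ.natDegree := by
      by_cases h0 : a = 0
      · rw [hψeq, h0, add_zero]
      · have hlt : a.degree < φ.degree := by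
          rw [Polynomial.degree_eq_natDegree h0,
            Polynomial.degree_eq_natDegree hφmonic.ne_zero]
          exact_mod_cast hadeg
        rw [hψeq, Polynomial.natDegree_add_eq_left_of_natDegree_lt hadeg]
    have hψmonic : ψ.Monic := by
      by_cases h0 : a = 0
      · rw [hψeq, h0, add_zero]; exact hφmonic
      · have hlt : a.degree < φ.degree := by
          rw [Polynomial.degree_eq_natDegree h0,
            Polynomial.degree_eq_natDegree hφmonic.ne_zero]
          exact_mod_cast hadeg
        rw [hψeq]
        exact hφmonic.add_of_left hlt
    have hψuns : ¬ IsStablePoly ρ ψ := by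
      rintro ⟨i, hi⟩
      refine hφuns ⟨max i i₀, fun j hj => ?_⟩
      have hstep : ∀ k : ι, max i i₀ ≤ k → ρ k φ = ρ i ψ := by
        intro k hk
        have hka : ρ k a = β := hi₀ k (le_trans (le_max_right _ _) hk)
        have := aux_add_lt (hval k) (f := φ) (g := a)
          (by rw [hka]; exact hβlt k)
        rw [← hψeq] at this
        rw [← this, hi k (le_trans (le_max_left _ _) hk)]
      rw [hstep j hj, hstep (max i i₀) le_rfl]
    exact ⟨hψmonic, hψuns, fun f hf => hψdeg ▸ hφmin f hf⟩
end

section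
/- Let A and B be totally ordered families in T, and suppose that neither of them is a continuous family with m = m_∞ < ∞ (an inessential continuous family). Then A ∼ B if and only if K[x]_A = K[x]_B and ρ_A(f) = ρ_B(f) for all f in this common set of stable polynomials. -/
open Polynomial

open MLV

namespace MLV
namespace MLVAux

variable {K : Type*} [Field K] {Λ : Type*} [AddCommGroup Λ] [LinearOrder Λ] [IsOrderedAddMonoid Λ]

/-! ### Basic consequences of `IsValT` -/

section ValBasics

variable {v : FieldVal K Λ} {μ ν : Polynomial K → WithTop Λ}

theorem _root_.MLV.IsValT.one (h : IsValT v μ) : μ 1 = 0 := h.1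

theorem _root_.MLV.IsValT.zero (h : IsValT v μ) : μ 0 = ⊤ := h.2.1

theorem _root_.MLV.IsValT.mul (h : IsValT v μ) (f g : Polynomial K) : μ (f * g) = μ f + μ g :=
  h.2.2.1 f g

theorem _root_.MLV.IsValT.minle (h : IsValT v μ) (f g : Polynomial K) :
    min (μ f) (μ g) ≤ μ (f + g) := h.2.2.2.1 f g

theorem _root_.MLV.IsValT.valC (h : IsValT v μ) (a : K) : μ (C a) = v.v a := h.2.2.2.2 a

theorem _root_.MLV.FieldVal.v_neg_one (v : FieldVal K Λ) : v.v (-1) = 0 := by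
  have h2 : v.v (-1) + v.v (-1) = 0 := by
    rw [← v.map_mul']; norm_num; exact v.map_one'
  rcases eq_or_ne (v.v (-1)) ⊤ with ht | ht
  · rw [ht] at h2; simp at h2
  · lift v.v (-1) to Λ using ht with a ha
    have haa : a + a = 0 := by exact_mod_cast h2
    have ha0 : a = 0 := by
      rcases lt_trichotomy a 0 with h | h | h
      · exact absurd haa (ne_of_lt (by simpa using add_lt_add h h))
      · exact h
      · exact absurd haa (ne_of_gt (by simpa using add_lt_add h h))
    rw [ha0]; rfl

theorem _root_.MLV.IsValT.neg (h : IsValT v μ) (f : Polynomial K) : μ (-f) = μ f := by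
  have hf : (-f) = C (-1) * f := by rw [map_neg, map_one, neg_one_mul]
  rw [hf, h.mul, h.valC, FieldVal.v_neg_one, zero_add]

theorem _root_.MLV.IsValT.minle_sub (h : IsValT v μ) (f g : Polynomial K) :
    min (μ f) (μ g) ≤ μ (f - g) := by
  have := h.minle f (-g)
  rw [h.neg g] at this
  rwa [← sub_eq_add_neg] at this

/-- If `μ g > μ f` then `μ (f + g) = μ f`. -/
theorem _root_.MLV.IsValT.add_eq_left (h : IsValT v μ) {f g : Polynomial K} (hfg : μ f < μ g) :
    μ (f + g) = μ f := by
  refine le_antisymm ?_ ((le_min (le_refl _) hfg.le).trans (h.minle f g))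
  by_contra hcon
  push_neg at hcon
  have h1 : μ f = μ ((f + g) - g) := by ring_nf
  have h2 := h.minle_sub (f + g) g
  rw [← h1] at h2
  exact absurd h2 (not_le_of_gt (lt_min hcon hfg))

theorem _root_.MLV.IsValT.smulC (h : IsValT v μ) (c : K) (f : Polynomial K) :
    μ (C c * f) = v.v c + μ f := by rw [h.mul, h.valC]

theorem _root_.MLV.IsValT.pow_val (h : IsValT v μ) (g : Polynomial K) (s : ℕ) :
    μ (g ^ s) = s • μ g := by
  induction s with
  | zero => simpa using h.one
  | succ n ih => rw [pow_succ, h.mul, ih, succ_nsmul]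

theorem _root_.MLV.IsValT.term_val (h : IsValT v μ) (a g : Polynomial K) (s : ℕ) :
    μ (a * g ^ s) = μ a + s • μ g := by rw [h.mul, h.pow_val]

/-- lower bound for the value of a finite sum. -/
theorem _root_.MLV.IsValT.sum_le {β : Type*} (h : IsValT v μ) (S : Finset β)
    (t : β → Polynomial K)
    {c : WithTop Λ} (hc : ∀ s ∈ S, c ≤ μ (t s)) : c ≤ μ (∑ s ∈ S, t s) := by
  classical
  induction S using Finset.induction_on with
  | empty => simp [h.zero]
  | @insert a S' hnot ih =>
    rw [Finset.sum_insert hnot]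
    refine le_trans (le_min (hc a (by simp)) (ih fun s hs => hc s (by simp [hs]))) ?_
    exact h.minle _ _

/-- some term of a finite sum has value at most the value of the sum. -/
theorem _root_.MLV.IsValT.exists_term_le {β : Type*} (h : IsValT v μ) (S : Finset β)
    (hS : S.Nonempty) (t : β → Polynomial K) :
    ∃ s ∈ S, μ (t s) ≤ μ (∑ s ∈ S, t s) := by
  classical
  induction S using Finset.induction_on with
  | empty => exact absurd hS (by simp)
  | @insert a S' hnot ih =>
    rw [Finset.sum_insert hnot]
    rcases le_or_gt (μ (t a)) (μ (t a + ∑ s ∈ S', t s)) with hle | hlt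
    · exact ⟨a, by simp, hle⟩
    · rcases S'.eq_empty_or_nonempty with rfl | hS'
      · simp only [Finset.sum_empty, add_zero] at hlt
        exact absurd hlt (lt_irrefl _)
      · obtain ⟨s, hs, hle⟩ := ih hS'
        have hmin := h.minle (t a) (∑ s ∈ S', t s)
        rcases min_cases (μ (t a)) (μ (∑ s ∈ S', t s)) with ⟨heq, _⟩ | ⟨heq, _⟩
        · rw [heq] at hmin
          exact absurd hmin (not_le_of_gt hlt)
        · rw [heq] at hmin
          exact ⟨s, by simp [hs], hle.trans hmin⟩

end ValBasics

/-! ### `φ`-expansions -/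

section Expansion

variable {φ : Polynomial K}

theorem expCoeff_zero' (φ f : Polynomial K) : expCoeff φ f 0 = f %ₘ φ := by
  unfold MLV.expCoeff; rw [pow_zero, divByMonic_one]

theorem degree_expCoeff_lt (hφ : φ.Monic) (f : Polynomial K) (s : ℕ) :
    (expCoeff φ f s).degree < φ.degree := degree_modByMonic_lt _ hφ

theorem natDegree_expCoeff_lt (hφ : φ.Monic) (f : Polynomial K) (s : ℕ)
    (h0 : expCoeff φ f s ≠ 0) : (expCoeff φ f s).natDegree < φ.natDegree :=
  natDegree_lt_natDegree h0 (degree_expCoeff_lt hφ f s)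

theorem expCoeff_eq_zero (hφ : φ.Monic) (h1 : 0 < φ.natDegree) {f : Polynomial K} {s : ℕ}
    (hs : f.natDegree < s) : expCoeff φ f s = 0 := by
  unfold MLV.expCoeff
  have hd : f.degree < (φ ^ s).degree := by
    rw [degree_eq_natDegree (hφ.pow s).ne_zero, natDegree_pow]
    refine lt_of_le_of_lt (degree_le_natDegree) ?_
    exact_mod_cast lt_of_lt_of_le hs (Nat.le_mul_of_pos_right s h1)
  rw [(divByMonic_eq_zero_iff (hφ.pow s)).mpr hd, zero_modByMonic]

theorem divByMonic_pow_succ (hφ : φ.Monic) (f : Polynomial K) (s : ℕ) :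
    f /ₘ φ ^ (s + 1) = (f /ₘ φ) /ₘ (φ ^ s) := by
  refine (div_modByMonic_unique ((f /ₘ φ) /ₘ (φ ^ s))
    (φ * ((f /ₘ φ) %ₘ (φ ^ s)) + f %ₘ φ) (hφ.pow (s + 1)) ⟨?_, ?_⟩).1
  · have h1 := modByMonic_add_div f φ
    have h2 := modByMonic_add_div (f /ₘ φ) (φ ^ s)
    calc φ * ((f /ₘ φ) %ₘ (φ ^ s)) + f %ₘ φ + φ ^ (s + 1) * ((f /ₘ φ) /ₘ (φ ^ s))
        = f %ₘ φ + φ * ((f /ₘ φ) %ₘ (φ ^ s) + φ ^ s * ((f /ₘ φ) /ₘ (φ ^ s))) := by ring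
      _ = f := by rw [h2, h1]
  · have hb : φ.degree ≠ ⊥ := by
      rw [degree_eq_natDegree hφ.ne_zero]; exact (WithBot.coe_ne_bot)
    have hps : (φ ^ (s + 1)).degree = φ.degree + (φ ^ s).degree := by
      rw [pow_succ']; exact degree_mul
    have hd1 : (φ * ((f /ₘ φ) %ₘ (φ ^ s))).degree < (φ ^ (s + 1)).degree := by
      rw [degree_mul, hps]
      exact WithBot.add_lt_add_left hb (degree_modByMonic_lt _ (hφ.pow s))
    have hd2 : (f %ₘ φ).degree < (φ ^ (s + 1)).degree := by
      refine lt_of_lt_of_le (degree_modByMonic_lt _ hφ) ?_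
      exact degree_le_of_dvd (dvd_pow_self φ (Nat.succ_ne_zero s)) (pow_ne_zero _ hφ.ne_zero)
    exact lt_of_le_of_lt (degree_add_le _ _) (max_lt hd1 hd2)

theorem expCoeff_succ (hφ : φ.Monic) (f : Polynomial K) (s : ℕ) :
    expCoeff φ f (s + 1) = expCoeff φ (f /ₘ φ) s := by
  unfold MLV.expCoeff; rw [divByMonic_pow_succ hφ]

theorem expansion (hφ : φ.Monic) (h1 : 0 < φ.natDegree) {n : ℕ} (f : Polynomial K)
    (hn : f.natDegree ≤ n) :
    ∑ s ∈ Finset.range (n + 1), expCoeff φ f s * φ ^ s = f := by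
  induction n generalizing f with
  | zero =>
    rw [Finset.sum_range_one, pow_zero, mul_one, expCoeff_zero']
    refine (modByMonic_eq_self_iff hφ).mpr ?_
    refine lt_of_le_of_lt degree_le_natDegree ?_
    rw [degree_eq_natDegree hφ.ne_zero]
    exact_mod_cast lt_of_le_of_lt hn h1
  | succ n ih =>
    rw [Finset.sum_range_succ']
    have hq : (f /ₘ φ).natDegree ≤ n := by
      rw [natDegree_divByMonic f hφ]; omega
    have hterm : ∀ s : ℕ, expCoeff φ f (s + 1) * φ ^ (s + 1)
        = φ * (expCoeff φ (f /ₘ φ) s * φ ^ s) := by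
      intro s; rw [expCoeff_succ hφ, pow_succ']; ring
    calc (∑ s ∈ Finset.range (n + 1), expCoeff φ f (s + 1) * φ ^ (s + 1))
          + expCoeff φ f 0 * φ ^ 0
        = f %ₘ φ + φ * ∑ s ∈ Finset.range (n + 1), expCoeff φ (f /ₘ φ) s * φ ^ s := by
          rw [Finset.mul_sum, expCoeff_zero', pow_zero, mul_one]
          rw [Finset.sum_congr rfl fun s _ => hterm s]; ring
      _ = f := by rw [ih _ hq, modByMonic_add_div f φ]

end Expansion

/-! ### The expansion bound for `μ`-minimal polynomials (MacLane's theorem) -/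

section KeyBound

variable {v : FieldVal K Λ} {μ : Polynomial K → WithTop Λ} {X : Polynomial K}

private theorem sum_shift (hX : X.Monic) (I : Finset ℕ) (hI : ∀ s ∈ I, s ≠ 0)
    (a : ℕ → Polynomial K) :
    ∑ s ∈ I, a s * X ^ s = X * ∑ s ∈ I, a s * X ^ (s - 1) := by
  rw [Finset.mul_sum]
  refine Finset.sum_congr rfl fun s hs => ?_
  have h1 : s - 1 + 1 = s := Nat.succ_pred_eq_of_pos (Nat.pos_of_ne_zero (hI s hs))
  calc a s * X ^ s = a s * X ^ (s - 1 + 1) := by rw [h1]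
    _ = X * (a s * X ^ (s - 1)) := by rw [pow_succ]; ring

/-- the case `0 ∈ I` of the equal-value-terms sublemma: uses `μ`-minimality of `X`. -/
private theorem equal_terms_zero_mem (hμ : IsValT v μ) (hX : X.Monic)
    (hmin : ∀ f : Polynomial K, f ≠ 0 → f.degree < X.degree → ¬ MuDvd μ X f)
    (I : Finset ℕ) (h0 : 0 ∈ I) (a : ℕ → Polynomial K) (m : Λ)
    (hdeg : ∀ s ∈ I, (a s).degree < X.degree)
    (hval : ∀ s ∈ I, μ (a s * X ^ s) = (m : WithTop Λ)) :
    μ (∑ s ∈ I, a s * X ^ s) ≤ (m : WithTop Λ) := by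
  by_contra hcon
  push_neg at hcon
  have ha0val : μ (a 0) = (m : WithTop Λ) := by
    have := hval 0 h0; rwa [pow_zero, mul_one] at this
  have ha0ne : a 0 ≠ 0 := by
    intro h; rw [h, hμ.zero] at ha0val; exact (WithTop.coe_ne_top ha0val.symm)
  set G := ∑ s ∈ I.erase 0, a s * X ^ (s - 1) with hG
  have hsplit : ∑ s ∈ I, a s * X ^ s = a 0 + X * G := by
    rw [← Finset.add_sum_erase _ _ h0, pow_zero, mul_one, hG,
      ← sum_shift hX _ (fun s hs => (Finset.mem_erase.mp hs).1) a]
  refine hmin (a 0) ha0ne (hdeg 0 h0) ⟨-G, ?_⟩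
  show μ (a 0) < μ (a 0 - (-G) * X)
  have harg : a 0 - (-G) * X = a 0 + X * G := by ring
  rw [harg, ← hsplit, ha0val]
  exact hcon

private theorem equal_terms_le (hμ : IsValT v μ) (hX : X.Monic)
    (hmin : ∀ f : Polynomial K, f ≠ 0 → f.degree < X.degree → ¬ MuDvd μ X f) :
    ∀ (n : ℕ) (I : Finset ℕ) (hne : I.Nonempty), I.min' hne ≤ n →
      ∀ (a : ℕ → Polynomial K) (m : Λ), (∀ s ∈ I, (a s).degree < X.degree) →
      (∀ s ∈ I, μ (a s * X ^ s) = (m : WithTop Λ)) →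
      μ (∑ s ∈ I, a s * X ^ s) ≤ (m : WithTop Λ) := by
  intro n
  induction n with
  | zero =>
    intro I hne hle a m hdeg hval
    have h0 : 0 ∈ I := by
      have hmem := I.min'_mem hne
      have hz : I.min' hne = 0 := Nat.le_zero.mp hle
      rwa [hz] at hmem
    exact equal_terms_zero_mem hμ hX hmin I h0 a m hdeg hval
  | succ n ih =>
    intro I hne hle a m hdeg hval
    by_cases h0 : 0 ∈ I
    · exact equal_terms_zero_mem hμ hX hmin I h0 a m hdeg hval
    · have hpos : ∀ s ∈ I, s ≠ 0 := fun s hs h => h0 (h ▸ hs)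
      -- `μ X` is finite
      have hne2 := hne
      obtain ⟨s₀, hs₀⟩ := hne2
      have hs₀v := hval s₀ hs₀
      rw [hμ.term_val] at hs₀v
      have hXne : μ X ≠ ⊤ := by
        intro hT
        have hs₀pos : s₀ ≠ 0 := hpos s₀ hs₀
        have htop : s₀ • (⊤ : WithTop Λ) = ⊤ := by
          rcases Nat.exists_eq_succ_of_ne_zero hs₀pos with ⟨k, rfl⟩
          rw [succ_nsmul, add_top]
        rw [hT, htop, add_top] at hs₀v
        exact (WithTop.coe_ne_top hs₀v.symm)
      obtain ⟨x, hx⟩ := WithTop.ne_top_iff_exists.mp hXne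
      -- the shifted terms all have value `m - x`
      have hshiftval : ∀ s ∈ I, μ (a s * X ^ (s - 1)) = ((m - x : Λ) : WithTop Λ) := by
        intro s hs
        have h1 : s - 1 + 1 = s := Nat.succ_pred_eq_of_pos (Nat.pos_of_ne_zero (hpos s hs))
        have h2 : μ (a s * X ^ s) = μ (a s * X ^ (s - 1)) + μ X := by
          have hmul : a s * X ^ s = (a s * X ^ (s - 1)) * X := by
            rw [mul_assoc, ← pow_succ, h1]
          rw [hmul, hμ.mul]
        have h3 : μ (a s * X ^ (s - 1)) + (x : WithTop Λ) = (m : WithTop Λ) := by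
          rw [hx, ← h2]; exact hval s hs
        have h4 : μ (a s * X ^ (s - 1)) ≠ ⊤ := by
          intro hT; rw [hT] at h3; simp at h3
        obtain ⟨y, hy⟩ := WithTop.ne_top_iff_exists.mp h4
        rw [← hy] at h3 ⊢
        have hyx : y + x = m := by exact_mod_cast h3
        norm_cast
        exact eq_sub_of_add_eq hyx
      -- reindex
      set I' := I.image (· - 1) with hI'
      have hinj : Set.InjOn (· - 1) I := by
        intro s hs t ht hst
        have hs1 := hpos s hs; have ht1 := hpos t ht
        have hst' : s - 1 = t - 1 := hst
        omega
      have hne' : I'.Nonempty := Finset.Nonempty.image hne _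
      have hsum' : ∑ t ∈ I', a (t + 1) * X ^ t = ∑ s ∈ I, a s * X ^ (s - 1) := by
        rw [hI', Finset.sum_image hinj]
        refine Finset.sum_congr rfl fun s hs => ?_
        have h1 : s - 1 + 1 = s := Nat.succ_pred_eq_of_pos (Nat.pos_of_ne_zero (hpos s hs))
        rw [h1]
      have hmin' : I'.min' hne' ≤ n := by
        have hmem : I.min' hne - 1 ∈ I' := Finset.mem_image_of_mem _ (I.min'_mem hne)
        have hle1 := Finset.min'_le I' _ hmem
        have hne0 : I.min' hne ≠ 0 := hpos _ (I.min'_mem hne)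
        omega
      have hdeg' : ∀ t ∈ I', (a (t + 1)).degree < X.degree := by
        intro t ht
        obtain ⟨s, hs, rfl⟩ := Finset.mem_image.mp ht
        have h1 : s - 1 + 1 = s := Nat.succ_pred_eq_of_pos (Nat.pos_of_ne_zero (hpos s hs))
        rw [h1]
        exact hdeg s hs
      have hval' : ∀ t ∈ I', μ (a (t + 1) * X ^ t) = ((m - x : Λ) : WithTop Λ) := by
        intro t ht
        obtain ⟨s, hs, rfl⟩ := Finset.mem_image.mp ht
        have h1 : s - 1 + 1 = s := Nat.succ_pred_eq_of_pos (Nat.pos_of_ne_zero (hpos s hs))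
        rw [h1]
        exact hshiftval s hs
      have hIH := ih I' hne' hmin' (fun t => a (t + 1)) (m - x) hdeg' hval'
      rw [hsum'] at hIH
      rw [sum_shift hX I hpos a, hμ.mul, ← hx]
      calc (x : WithTop Λ) + μ (∑ s ∈ I, a s * X ^ (s - 1))
          ≤ (x : WithTop Λ) + ((m - x : Λ) : WithTop Λ) := add_le_add_right hIH _
        _ = (m : WithTop Λ) := by
            rw [← WithTop.coe_add]
            congr 1
            abel

/-- **MacLane's bound**: if `X` is `μ`-minimal then every term of the `X`-expansion of `f`
has value at least `μ f`. -/
theorem minimal_le_term (hμ : IsValT v μ) (hX : X.Monic) (h1 : 0 < X.natDegree)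
    (hmin : ∀ f : Polynomial K, f ≠ 0 → f.degree < X.degree → ¬ MuDvd μ X f)
    (f : Polynomial K) (s₀ : ℕ) :
    μ f ≤ μ (expCoeff X f s₀ * X ^ s₀) := by
  by_cases hs₀ : f.natDegree < s₀
  · rw [expCoeff_eq_zero hX h1 hs₀, zero_mul, hμ.zero]; exact le_top
  push_neg at hs₀
  by_contra hcon
  push_neg at hcon
  classical
  obtain ⟨sm, hsm, hmins⟩ := Finset.exists_min_image (Finset.range (f.natDegree + 1))
    (fun s => μ (expCoeff X f s * X ^ s)) ⟨0, by simp⟩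
  have hexp : ∑ s ∈ Finset.range (f.natDegree + 1), expCoeff X f s * X ^ s = f :=
    expansion hX h1 f (le_refl _)
  have hs₀mem : s₀ ∈ Finset.range (f.natDegree + 1) := Finset.mem_range.mpr (by omega)
  have hm_lt : μ (expCoeff X f sm * X ^ sm) < μ f := lt_of_le_of_lt (hmins s₀ hs₀mem) hcon
  obtain ⟨m, hm⟩ := WithTop.ne_top_iff_exists.mp (ne_top_of_lt hm_lt)
  set I := (Finset.range (f.natDegree + 1)).filter
    (fun s => μ (expCoeff X f s * X ^ s) = (m : WithTop Λ)) with hI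
  have hIne : I.Nonempty := ⟨sm, Finset.mem_filter.mpr ⟨hsm, hm.symm⟩⟩
  set g := ∑ s ∈ I, expCoeff X f s * X ^ s with hg
  set h := ∑ s ∈ (Finset.range (f.natDegree + 1)).filter
    (fun s => ¬ μ (expCoeff X f s * X ^ s) = (m : WithTop Λ)), expCoeff X f s * X ^ s with hh
  have hgh : g + h = f := by
    rw [hg, hh, Finset.sum_filter_add_sum_filter_not, hexp]
  have hhgt : (m : WithTop Λ) < μ h := by
    rcases ((Finset.range (f.natDegree + 1)).filter
        (fun s => ¬ μ (expCoeff X f s * X ^ s) = (m : WithTop Λ))).eq_empty_or_nonempty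
        with he | hne
    · rw [hh, he, Finset.sum_empty, hμ.zero]
      exact WithTop.coe_lt_top m
    · obtain ⟨s', hs', hle⟩ := hμ.exists_term_le _ hne (fun s => expCoeff X f s * X ^ s)
      have hs'r := Finset.mem_filter.mp hs'
      refine lt_of_lt_of_le ?_ hle
      rw [hm]
      exact lt_of_le_of_ne (hmins s' hs'r.1)
        (fun heq => hs'r.2 (by rw [← heq, hm]))
  have hmf : (m : WithTop Λ) < μ f := by rw [hm]; exact hm_lt
  have hggt : (m : WithTop Λ) < μ g := by
    have hgfh : g = f - h := by rw [← hgh]; ring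
    rw [hgfh]
    exact lt_of_lt_of_le (lt_min hmf hhgt) (hμ.minle_sub f h)
  have hsub := equal_terms_le hμ hX hmin (I.min' hIne) I hIne (le_refl _)
    (expCoeff X f) m (fun s _ => degree_expCoeff_lt hX f s)
    (fun s hs => (Finset.mem_filter.mp hs).2)
  rw [← hg] at hsub
  exact absurd hsub (not_le_of_gt hggt)

end KeyBound

/-! ### Tangent polynomials are key polynomials -/

section Tangent

variable {v : FieldVal K Λ} {μ ν : Polynomial K → WithTop Λ} {φ : Polynomial K}
variable (hμ : IsValT v μ) (hν : IsValT v ν) (hle : ∀ f, μ f ≤ ν f)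
variable (hφ : φ.Monic) (hlt : μ φ < ν φ)
variable (hfroz : ∀ g : Polynomial K, g.natDegree < φ.natDegree → μ g = ν g)

include hμ hν hle hφ hlt hfroz

theorem tangent_natDegree_pos : 0 < φ.natDegree := by
  by_contra h
  push_neg at h
  have h0 : φ.natDegree = 0 := Nat.le_zero.mp h
  have h1 : φ = 1 := hφ.natDegree_eq_zero.mp h0
  rw [h1, hμ.one, hν.one] at hlt
  exact lt_irrefl _ hlt

theorem tangent_frozen_degree {g : Polynomial K} (hg : g.degree < φ.degree) : μ g = ν g := by
  rcases eq_or_ne g 0 with rfl | hg0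
  · rw [hμ.zero, hν.zero]
  · exact hfroz g (natDegree_lt_natDegree hg0 hg)

theorem tangent_minimal :
    ∀ f : Polynomial K, f ≠ 0 → f.degree < φ.degree → ¬ MuDvd μ φ f := by
  rintro f hf0 hfd ⟨q, hq⟩
  replace hq : μ f < μ (f - q * φ) := hq
  have hνf : ν f = μ f := (tangent_frozen_degree hμ hν hle hφ hlt hfroz hfd).symm
  have hftop : μ f ≠ ⊤ := ne_top_of_lt hq
  -- μ (q * φ) = μ f
  have h1 : μ f ≤ μ (q * φ) := by
    have h2 := hμ.minle_sub f (f - q * φ)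
    have h3 : f - (f - q * φ) = q * φ := by ring
    rw [h3, min_eq_left hq.le] at h2
    exact h2
  have h2 : μ (q * φ) ≤ μ f := by
    by_contra hcon
    push_neg at hcon
    have h3 := hμ.minle (f - q * φ) (q * φ)
    rw [sub_add_cancel] at h3
    exact absurd (lt_of_lt_of_le (lt_min hq hcon) h3) (lt_irrefl _)
  have hqφ : μ (q * φ) = μ f := le_antisymm h2 h1
  have hqtop : μ q ≠ ⊤ := by
    intro hT
    rw [hμ.mul, hT, top_add] at hqφ
    exact hftop hqφ.symm
  have hν1 : μ f < ν (f - q * φ) := lt_of_lt_of_le hq (hle _)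
  have hν2 : μ f < ν (q * φ) := by
    rw [hν.mul]
    calc μ f = μ q + μ φ := by rw [← hμ.mul]; exact hqφ.symm
      _ < μ q + ν φ := WithTop.add_lt_add_left hqtop hlt
      _ ≤ ν q + ν φ := add_le_add_left (hle q) _
  have hmin := hν.minle (f - q * φ) (q * φ)
  rw [sub_add_cancel] at hmin
  have : μ f < ν f := lt_of_lt_of_le (lt_min hν1 hν2) hmin
  rw [hνf] at this
  exact lt_irrefl _ this

theorem tangent_dvd_iff (g : Polynomial K) :
    MuDvd μ φ g ↔ μ g < μ (g %ₘ φ) := by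
  have hpos := tangent_natDegree_pos hμ hν hle hφ hlt hfroz
  have hmin := tangent_minimal hμ hν hle hφ hlt hfroz
  constructor
  · rintro ⟨q, hq⟩
    replace hq : μ g < μ (g - q * φ) := hq
    have hmod : (g - q * φ) %ₘ φ = g %ₘ φ :=
      modByMonic_eq_of_dvd_sub hφ ⟨-q, by ring⟩
    have h3 := minimal_le_term hμ hφ hpos hmin (g - q * φ) 0
    rw [expCoeff_zero', pow_zero, mul_one, hmod] at h3
    exact lt_of_lt_of_le hq h3
  · intro hlt2
    refine ⟨g /ₘ φ, ?_⟩
    show μ g < μ (g - (g /ₘ φ) * φ)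
    have harg : g - (g /ₘ φ) * φ = g %ₘ φ := by
      have h := modByMonic_add_div g φ
      linear_combination -h
    rw [harg]
    exact hlt2

theorem tangent_not_unit : ¬ ∃ f : Polynomial K, MuEquiv μ (f * φ) 1 := by
  rintro ⟨f, hf⟩
  replace hf : μ (f * φ) < μ (f * φ - 1) := hf
  have hfφtop : μ (f * φ) ≠ ⊤ := ne_top_of_lt hf
  have hftop : μ f ≠ ⊤ := by
    intro hT; rw [hμ.mul, hT, top_add] at hfφtop; exact hfφtop rfl
  have hν1 : μ (f * φ) < ν (f * φ) := by
    rw [hν.mul, hμ.mul]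
    calc μ f + μ φ < μ f + ν φ := WithTop.add_lt_add_left hftop hlt
      _ ≤ ν f + ν φ := add_le_add_left (hle f) _
  have hν2 : μ (f * φ) < ν (f * φ - 1) := lt_of_lt_of_le hf (hle _)
  have hmin0 := hν.minle_sub (f * φ) (f * φ - 1)
  have harg : (f * φ) - (f * φ - 1) = 1 := by ring
  rw [harg, hν.one] at hmin0
  have h0 : μ (f * φ) < 0 := lt_of_lt_of_le (lt_min hν1 hν2) hmin0
  -- but then `μ (f*φ - 1) = μ (f*φ)`
  have hneg1 : μ (-1 : Polynomial K) = 0 := by rw [hμ.neg, hμ.one]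
  have heq : μ (f * φ - 1) = μ (f * φ) := by
    have h1 : f * φ - 1 = f * φ + (-1) := by ring
    rw [h1]
    exact hμ.add_eq_left (by rw [hneg1]; exact h0)
  rw [heq] at hf
  exact lt_irrefl _ hf

theorem tangent_prime :
    ∀ f h : Polynomial K, MuDvd μ φ (f * h) → MuDvd μ φ f ∨ MuDvd μ φ h := by
  intro f h hdvd
  have hpos := tangent_natDegree_pos hμ hν hle hφ hlt hfroz
  have hminimal := tangent_minimal hμ hν hle hφ hlt hfroz
  have hdvdiff := tangent_dvd_iff hμ hν hle hφ hlt hfroz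
  by_contra hcon
  push_neg at hcon
  obtain ⟨hcf, hch⟩ := hcon
  rw [hdvdiff] at hdvd hcf hch
  push_neg at hcf hch
  have hrf : μ (f %ₘ φ) = μ f :=
    le_antisymm hcf (by
      have := minimal_le_term hμ hφ hpos hminimal f 0
      rwa [expCoeff_zero', pow_zero, mul_one] at this)
  have hrh : μ (h %ₘ φ) = μ h :=
    le_antisymm hch (by
      have := minimal_le_term hμ hφ hpos hminimal h 0
      rwa [expCoeff_zero', pow_zero, mul_one] at this)
  set rf := f %ₘ φ with hrfdef
  set rh := h %ₘ φ with hrhdef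
  set R := rf * rh with hRdef
  have hfhtop : μ (f * h) ≠ ⊤ := ne_top_of_lt hdvd
  have hμR : μ R = μ (f * h) := by
    rw [hRdef, hμ.mul, hrf, hrh, ← hμ.mul]
  have hmodR : (f * h) %ₘ φ = R %ₘ φ := by
    refine modByMonic_eq_of_dvd_sub hφ ?_
    have h1 : f - rf = φ * (f /ₘ φ) := by
      have hh := modByMonic_add_div f φ
      rw [hrfdef]
      linear_combination -hh
    have h2 : h - rh = φ * (h /ₘ φ) := by
      have hh := modByMonic_add_div h φ
      rw [hrhdef]
      linear_combination -hh
    refine ⟨(f /ₘ φ) * h + rf * (h /ₘ φ), ?_⟩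
    calc f * h - R = (f - rf) * h + rf * (h - rh) := by rw [hRdef]; ring
      _ = φ * ((f /ₘ φ) * h + rf * (h /ₘ φ)) := by rw [h1, h2]; ring
  rw [hmodR] at hdvd
  -- `hdvd : μ (f*h) < μ (R %ₘ φ)` ; rewrite as statement about `R`
  have hdvdR : μ R < μ (R %ₘ φ) := by rw [hμR]; exact hdvd
  -- R ≠ 0 and degrees
  have hRtop : μ R ≠ ⊤ := by rw [hμR]; exact hfhtop
  have hRne : R ≠ 0 := by intro h0; rw [h0, hμ.zero] at hRtop; exact hRtop rfl
  have hrfne : rf ≠ 0 := by rintro h0; rw [hRdef, h0, zero_mul] at hRne; exact hRne rfl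
  have hrhne : rh ≠ 0 := by rintro h0; rw [hRdef, h0, mul_zero] at hRne; exact hRne rfl
  have hdegrf : rf.natDegree < φ.natDegree :=
    natDegree_lt_natDegree hrfne (degree_modByMonic_lt f hφ)
  have hdegrh : rh.natDegree < φ.natDegree :=
    natDegree_lt_natDegree hrhne (degree_modByMonic_lt h hφ)
  set Q := R /ₘ φ with hQdef
  have hdegQ : Q.degree < φ.degree := by
    have hnR : R.natDegree = rf.natDegree + rh.natDegree := by
      rw [hRdef]; exact natDegree_mul hrfne hrhne
    have hnQ : Q.natDegree = R.natDegree - φ.natDegree := natDegree_divByMonic R hφ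
    rcases eq_or_ne Q 0 with h0 | h0
    · rw [h0]
      rw [degree_eq_natDegree hφ.ne_zero]
      exact lt_of_le_of_lt bot_le (by exact_mod_cast WithBot.bot_lt_coe _)
    · rw [degree_eq_natDegree h0, degree_eq_natDegree hφ.ne_zero]
      exact_mod_cast by omega
  -- μ (Q*φ) = μ R
  have hQφ_ge : μ R ≤ μ (Q * φ) := by
    have h3 := minimal_le_term hμ hφ hpos hminimal R 1
    have hE1 : expCoeff φ R 1 = Q := by
      unfold MLV.expCoeff
      rw [pow_one, ← hQdef]
      exact (modByMonic_eq_self_iff hφ).mpr hdegQ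
    rwa [hE1, pow_one] at h3
  have hQφ_le : μ (Q * φ) ≤ μ R := by
    have hsplit : R = R %ₘ φ + Q * φ := by
      have hh := modByMonic_add_div R φ
      rw [hQdef]
      linear_combination -hh
    have hminR := hμ.minle (R %ₘ φ) (Q * φ)
    rw [← hsplit] at hminR
    rcases min_cases (μ (R %ₘ φ)) (μ (Q * φ)) with ⟨heq, _⟩ | ⟨heq, _⟩
    · rw [heq] at hminR
      exact absurd (lt_of_lt_of_le hdvdR hminR) (lt_irrefl _)
    · rw [heq] at hminR
      exact hminR
  have hQφ : μ (Q * φ) = μ R := le_antisymm hQφ_le hQφ_ge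
  have hQtop : μ Q ≠ ⊤ := by
    intro hT
    rw [hμ.mul, hT, top_add] at hQφ
    exact hRtop hQφ.symm
  -- ν R = μ R, and yet ν R > μ R: contradiction
  have hνR : ν R = μ R := by
    rw [hRdef, hν.mul, hμ.mul, ← hfroz rf hdegrf, ← hfroz rh hdegrh]
  have hν1 : μ R < ν (R %ₘ φ) := lt_of_lt_of_le hdvdR (hle _)
  have hν2 : μ R < ν (Q * φ) := by
    rw [hν.mul]
    calc μ R = μ Q + μ φ := by rw [← hμ.mul]; exact hQφ.symm
      _ < μ Q + ν φ := WithTop.add_lt_add_left hQtop hlt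
      _ ≤ ν Q + ν φ := add_le_add_left (hle Q) _
  have hsplit : R = R %ₘ φ + Q * φ := by
    have hh := modByMonic_add_div R φ
    rw [hQdef]
    linear_combination -hh
  have hminν := hν.minle (R %ₘ φ) (Q * φ)
  rw [← hsplit] at hminν
  have : μ R < ν R := lt_of_lt_of_le (lt_min hν1 hν2) hminν
  rw [hνR] at this
  exact lt_irrefl _ this

/-- **Tangent polynomials are key polynomials.** -/
theorem tangent_key : IsKeyPol μ φ := by
  refine ⟨hφ, ⟨tangent_natDegree_pos hμ hν hle hφ hlt hfroz,
    tangent_minimal hμ hν hle hφ hlt hfroz⟩,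
    ne_top_of_lt hlt, tangent_not_unit hμ hν hle hφ hlt hfroz,
    tangent_prime hμ hν hle hφ hlt hfroz⟩

end Tangent

/-! ### Families -/

section Families

variable {ι : Type*} [LinearOrder ι] {κ : Type*} [LinearOrder κ]
variable {v : FieldVal K Λ}
variable {ρ : ι → Polynomial K → WithTop Λ} {σ : κ → Polynomial K → WithTop Λ}

theorem TOmono (hρ : IsTOFamily v ρ) {i j : ι} (hij : i ≤ j) (f : Polynomial K) :
    ρ i f ≤ ρ j f := hρ.2.2.1.monotone hij f

theorem stableVal_ge (hρ : IsTOFamily v ρ) {f : Polynomial K} {β : WithTop Λ}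
    (h : IsStableVal ρ f β) (i : ι) : ρ i f ≤ β := by
  obtain ⟨i₀, h₀⟩ := h
  calc ρ i f ≤ ρ (max i i₀) f := TOmono hρ (le_max_left _ _) f
    _ = β := h₀ _ (le_max_right _ _)

theorem stablePoly_val {f : Polynomial K} (h : IsStablePoly ρ f) :
    ∃ β, IsStableVal ρ f β := by
  obtain ⟨i, hi⟩ := h
  exact ⟨ρ i f, i, hi⟩

theorem unstable_exists_gt (hρ : IsTOFamily v ρ) {f : Polynomial K}
    (h : ¬ IsStablePoly ρ f) (i : ι) : ∃ j, i ≤ j ∧ ρ i f < ρ j f := by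
  by_contra hcon
  push_neg at hcon
  refine h ⟨i, fun j hj => le_antisymm (hcon j hj) (TOmono hρ hj f)⟩

theorem scale_monic {f : Polynomial K} (hf : f ≠ 0) :
    ∃ c : K, c ≠ 0 ∧ (C c * f).Monic ∧ (C c * f).natDegree = f.natDegree := by
  refine ⟨(f.leadingCoeff)⁻¹, inv_ne_zero (leadingCoeff_ne_zero.mpr hf), ?_, ?_⟩
  · rw [mul_comm]; exact monic_mul_leadingCoeff_inv hf
  · exact natDegree_C_mul (inv_ne_zero (leadingCoeff_ne_zero.mpr hf))

theorem stable_scale (hρv : ∀ i, IsValT v (ρ i)) {c : K} (hc : c ≠ 0) (f : Polynomial K)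
    (h : IsStablePoly ρ (C c * f)) : IsStablePoly ρ f := by
  obtain ⟨i, hi⟩ := h
  refine ⟨i, fun j hj => ?_⟩
  have h1 := hi j hj
  rw [(hρv j).smulC, (hρv i).smulC] at h1
  exact WithTop.add_left_cancel (v.ne_top' c hc) h1

end Families

/-! ### The main half -/

section MainHalf

variable {ι : Type*} [LinearOrder ι] {κ : Type*} [LinearOrder κ] [Nonempty κ]

theorem main_half (v : FieldVal K Λ) (ρ : ι → Polynomial K → WithTop Λ)
    (σ : κ → Polynomial K → WithTop Λ)
    (hρ : IsTOFamily v ρ) (hσ : IsTOFamily v σ)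
    (hρni : ¬ ∃ (m : ℕ) (φ : Polynomial K),
      HasStableDeg ρ m ∧ IsLimKeyPol ρ φ ∧ φ.natDegree = m)
    (hstab : ∀ f : Polynomial K, IsStablePoly ρ f ↔ IsStablePoly σ f)
    (hval : ∀ (f : Polynomial K) (β : WithTop Λ), IsStablePoly ρ f →
      (IsStableVal ρ f β ↔ IsStableVal σ f β))
    (i₀ : ι) : ∃ j, ∀ f, ρ i₀ f ≤ σ j f := by
  classical
  by_contra hcon
  push_neg at hcon
  have hρval : ∀ i, IsValT v (ρ i) := hρ.1
  have hσval : ∀ k, IsValT v (σ k) := hσ.1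
  -- badness, monic form
  have hbadm : ∀ k : κ, ∃ g : Polynomial K, g.Monic ∧ σ k g < ρ i₀ g := by
    intro k
    obtain ⟨f, hf⟩ := hcon k
    replace hf : σ k f < ρ i₀ f := hf
    have hf0 : f ≠ 0 := by
      intro h0
      rw [h0, (hσval k).zero, (hρval i₀).zero] at hf
      exact lt_irrefl _ hf
    obtain ⟨c, hc, hm, _⟩ := scale_monic hf0
    refine ⟨C c * f, hm, ?_⟩
    rw [(hσval k).smulC, (hρval i₀).smulC]
    exact WithTop.add_lt_add_left (v.ne_top' c hc) hf
  -- the tangent degree `cstar` from `i₀`, witness `ψ`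
  set CSet : Set ℕ := {n | ∃ i, i₀ ≤ i ∧ ∃ g : Polynomial K,
    g.Monic ∧ g.natDegree = n ∧ ρ i₀ g < ρ i g} with hCSet
  have hCne : CSet.Nonempty := by
    obtain ⟨i₁', hi₁'⟩ := hρ.2.2.2 i₀
    have hlt : ρ i₀ < ρ i₁' := hρ.2.2.1 hi₁'
    rw [Pi.lt_def] at hlt
    obtain ⟨hle, f, hf⟩ := hlt
    have hf0 : f ≠ 0 := by
      intro h0
      rw [h0, (hρval i₀).zero, (hρval i₁').zero] at hf
      exact lt_irrefl _ hf
    obtain ⟨c, hc, hm, hd⟩ := scale_monic hf0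
    refine ⟨(C c * f).natDegree, i₁', le_of_lt hi₁', C c * f, hm, rfl, ?_⟩
    rw [(hρval i₀).smulC, (hρval i₁').smulC]
    exact WithTop.add_lt_add_left (v.ne_top' c hc) hf
  obtain ⟨i₁, hi₀i₁, ψ, hψm, hψdeg, hψlt⟩ := Nat.sInf_mem hCne
  set cstar := sInf CSet with hcstar
  -- freezing below `cstar`
  have hfroz : ∀ g : Polynomial K, g.natDegree < cstar → ∀ i, i₀ ≤ i → ρ i g = ρ i₀ g := by
    intro g hg i hi
    refine le_antisymm ?_ (TOmono hρ hi g)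
    by_contra hcon2
    push_neg at hcon2
    have hlt2 : ρ i₀ g < ρ i g := hcon2
    have hg0 : g ≠ 0 := by
      intro h0
      rw [h0, (hρval i₀).zero, (hρval i).zero] at hlt2
      exact lt_irrefl _ hlt2
    obtain ⟨c, hc, hm, hd⟩ := scale_monic hg0
    have hmem : (C c * g).natDegree ∈ CSet := by
      refine ⟨i, hi, C c * g, hm, rfl, ?_⟩
      rw [(hρval i₀).smulC, (hρval i).smulC]
      exact WithTop.add_lt_add_left (v.ne_top' c hc) hlt2
    have := Nat.sInf_le hmem
    rw [hd] at this
    omega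
  have hstab_froz : ∀ g : Polynomial K, g.natDegree < cstar → IsStablePoly ρ g :=
    fun g hg => ⟨i₀, fun j hj => hfroz g hg j hj⟩
  have hsval_froz : ∀ g : Polynomial K, g.natDegree < cstar →
      IsStableVal σ g (ρ i₀ g) := by
    intro g hg
    exact (hval g _ (hstab_froz g hg)).mp ⟨i₀, fun j hj => hfroz g hg j hj⟩
  have hσ_le_froz : ∀ g : Polynomial K, g.natDegree < cstar → ∀ k, σ k g ≤ ρ i₀ g :=
    fun g hg k => stableVal_ge hσ (hsval_froz g hg) k
  -- ψ is a tangent polynomial for `(ρ i₀, ρ i₁)`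
  have hψfrozd : ∀ g : Polynomial K, g.natDegree < ψ.natDegree → ρ i₀ g = ρ i₁ g := by
    intro g hg
    rw [hψdeg] at hg
    exact (hfroz g hg i₁ hi₀i₁).symm
  have hψle : ∀ f, ρ i₀ f ≤ ρ i₁ f := TOmono hρ hi₀i₁
  have hψpos : 0 < ψ.natDegree :=
    tangent_natDegree_pos (hρval i₀) (hρval i₁) hψle hψm hψlt hψfrozd
  have hcstar_pos : 0 < cstar := hψdeg ▸ hψpos
  have hψmin : ∀ f : Polynomial K, f ≠ 0 → f.degree < ψ.degree → ¬ MuDvd (ρ i₀) ψ f :=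
    tangent_minimal (hρval i₀) (hρval i₁) hψle hψm hψlt hψfrozd
  have hψL3 : ∀ (f : Polynomial K) (s : ℕ),
      ρ i₀ f ≤ ρ i₀ (expCoeff ψ f s * ψ ^ s) :=
    minimal_le_term (hρval i₀) hψm hψpos hψmin
  -- the comparison chain through the ψ-expansion
  have hchain : ∀ k : κ, ρ i₀ ψ ≤ σ k ψ →
      (∀ a : Polynomial K, a.natDegree < cstar → ρ i₀ a ≤ σ k a) →
      ∀ f, ρ i₀ f ≤ σ k f := by
    intro k hψk hlow f
    have hexp := expansion hψm hψpos f (le_refl f.natDegree)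
    conv_rhs => rw [← hexp]
    refine (hσval k).sum_le _ _ (fun s _ => ?_)
    refine le_trans (hψL3 f s) ?_
    rw [(hρval i₀).term_val, (hσval k).term_val]
    refine add_le_add (hlow _ ?_) (nsmul_le_nsmul_right hψk s)
    rcases eq_or_ne (expCoeff ψ f s) 0 with h0 | h0
    · rw [h0]; simpa using hcstar_pos
    · rw [← hψdeg]; exact natDegree_expCoeff_lt hψm f s h0
  -- minimal degrees of bad polynomials
  set DBad : κ → Set ℕ := fun k =>
    {n | ∃ g : Polynomial K, g.Monic ∧ g.natDegree = n ∧ σ k g < ρ i₀ g} with hDBad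
  have hDne : ∀ k, (DBad k).Nonempty := by
    intro k
    obtain ⟨g, hgm, hglt⟩ := hbadm k
    exact ⟨g.natDegree, g, hgm, rfl, hglt⟩
  set d : κ → ℕ := fun k => sInf (DBad k) with hd
  have hdmem : ∀ k, d k ∈ DBad k := fun k => Nat.sInf_mem (hDne k)
  have hgood : ∀ (k : κ) (a : Polynomial K), a.natDegree < d k → ρ i₀ a ≤ σ k a := by
    intro k a ha
    by_contra hcon2
    push_neg at hcon2
    have ha0 : a ≠ 0 := by
      intro h0
      rw [h0, (hσval k).zero, (hρval i₀).zero] at hcon2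
      exact lt_irrefl _ hcon2
    obtain ⟨c, hc, hm, hdg⟩ := scale_monic ha0
    have hmem : (C c * a).natDegree ∈ DBad k := by
      refine ⟨C c * a, hm, rfl, ?_⟩
      rw [(hρval i₀).smulC, (hσval k).smulC]
      exact WithTop.add_lt_add_left (v.ne_top' c hc) hcon2
    have := Nat.sInf_le hmem
    rw [hdg] at this
    exact absurd ha (not_lt.mpr this)
  have hdle : ∀ k, d k ≤ cstar := by
    intro k
    by_contra hcon2
    push_neg at hcon2
    have hψgood : ρ i₀ ψ ≤ σ k ψ := hgood k ψ (by omega)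
    have hlow : ∀ a : Polynomial K, a.natDegree < cstar → ρ i₀ a ≤ σ k a :=
      fun a ha => hgood k a (by omega)
    obtain ⟨g, _, hglt⟩ := hbadm k
    exact absurd (hchain k hψgood hlow g) (not_le_of_gt hglt)
  have hdmono : ∀ {k k' : κ}, k ≤ k' → d k ≤ d k' := by
    intro k k' hkk'
    obtain ⟨g, hgm, hgd, hglt⟩ := hdmem k'
    refine Nat.sInf_le ⟨g, hgm, hgd, lt_of_le_of_lt (TOmono hσ hkk' g) hglt⟩
  -- the eventual bad degree `dstar`
  set DS : Set ℕ := {n | ∃ k, d k = n} with hDS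
  have hDSne : DS.Nonempty := ⟨d (Classical.arbitrary κ), Classical.arbitrary κ, rfl⟩
  have hDSbdd : BddAbove DS := by
    refine ⟨cstar, fun n hn => ?_⟩
    obtain ⟨k, rfl⟩ := hn
    exact hdle k
  obtain ⟨jstar, hjstar⟩ := Nat.sSup_mem hDSne hDSbdd
  set dstar := sSup DS with hdstar
  have hdmax : ∀ k, d k ≤ dstar := fun k => le_csSup hDSbdd ⟨k, rfl⟩
  have hdeq : ∀ k, jstar ≤ k → d k = dstar :=
    fun k hk => le_antisymm (hdmax k) (hjstar ▸ hdmono hk)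
  have hdstar_le : dstar ≤ cstar := hjstar ▸ hdle jstar
  -- ψ is not stable
  have hψuns : ¬ IsStablePoly ρ ψ := by
    rcases lt_or_eq_of_le hdstar_le with hltc | heqc
    · -- `dstar < cstar` : in this case `σ k ≤ ρ i₀` for all `k ≥ jstar`
      have hσle : ∀ k, jstar ≤ k → ∀ f, σ k f ≤ ρ i₀ f := by
        intro k hk f
        obtain ⟨g, hgm, hgdeg, hglt⟩ := hdmem k
        rw [hdeq k hk] at hgdeg
        have hgc : g.natDegree < cstar := by omega
        obtain ⟨K₁, hK₁⟩ := hsval_froz g hgc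
        set KK := max k K₁ with hKK
        have hKg : σ KK g = ρ i₀ g := hK₁ KK (le_max_right _ _)
        have hdiff : σ k g < σ KK g := by rw [hKg]; exact hglt
        -- the tangent for `(σ k, σ KK)`
        set ESet : Set ℕ := {n | ∃ θ : Polynomial K,
          θ.Monic ∧ θ.natDegree = n ∧ σ k θ < σ KK θ} with hESet
        have hEne : ESet.Nonempty := ⟨g.natDegree, g, hgm, rfl, hdiff⟩
        obtain ⟨θ, hθm, hθdeg, hθlt⟩ := Nat.sInf_mem hEne
        have heledstar : sInf ESet ≤ dstar := by
          have := Nat.sInf_le (show g.natDegree ∈ ESet from ⟨g, hgm, rfl, hdiff⟩)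
          omega
        have hθc : θ.natDegree < cstar := by omega
        have hσkKle : ∀ f, σ k f ≤ σ KK f := TOmono hσ (le_max_left _ _)
        have hθfroz : ∀ g' : Polynomial K, g'.natDegree < θ.natDegree →
            σ k g' = σ KK g' := by
          intro g' hg'
          refine le_antisymm (hσkKle g') ?_
          by_contra hcon2
          push_neg at hcon2
          have hg'0 : g' ≠ 0 := by
            intro h0
            rw [h0, (hσval k).zero, (hσval KK).zero] at hcon2
            exact lt_irrefl _ hcon2
          obtain ⟨c, hc, hm, hdg⟩ := scale_monic hg'0
          have hmem : (C c * g').natDegree ∈ ESet := by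
            refine ⟨C c * g', hm, rfl, ?_⟩
            rw [(hσval k).smulC, (hσval KK).smulC]
            exact WithTop.add_lt_add_left (v.ne_top' c hc) hcon2
          have := Nat.sInf_le hmem
          rw [hdg] at this
          omega
        have hθpos : 0 < θ.natDegree :=
          tangent_natDegree_pos (hσval k) (hσval KK) hσkKle hθm hθlt hθfroz
        have hθmin := tangent_minimal (hσval k) (hσval KK) hσkKle hθm hθlt hθfroz
        have hθL3 : ∀ (f : Polynomial K) (s : ℕ),
            σ k f ≤ σ k (expCoeff θ f s * θ ^ s) :=
          minimal_le_term (hσval k) hθm hθpos hθmin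
        -- pick the term of minimal `ρ i₀`-value in the θ-expansion of `f`
        obtain ⟨s₁, _, hs₁⟩ := (hρval i₀).exists_term_le (Finset.range (f.natDegree + 1))
          ⟨0, by simp⟩ (fun s => expCoeff θ f s * θ ^ s)
        rw [expansion hθm hθpos f (le_refl _)] at hs₁
        refine le_trans (hθL3 f s₁) (le_trans ?_ hs₁)
        rw [(hσval k).term_val, (hρval i₀).term_val]
        have hedeg : (expCoeff θ f s₁).natDegree < cstar := by
          rcases eq_or_ne (expCoeff θ f s₁) 0 with h0 | h0
          · rw [h0]; simpa using hcstar_pos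
          · have := natDegree_expCoeff_lt hθm f s₁ h0
            omega
        refine add_le_add (hσ_le_froz _ hedeg k) (nsmul_le_nsmul_right ?_ s₁)
        exact hσ_le_froz θ hθc k
      -- conclude instability of ψ
      intro hψst
      obtain ⟨V, hVρ⟩ := stablePoly_val hψst
      have hVσ : IsStableVal σ ψ V := (hval ψ V hψst).mp hVρ
      obtain ⟨K₁, hK₁⟩ := hVσ
      set KK := max K₁ jstar with hKK
      have h1 : σ KK ψ = V := hK₁ KK (le_max_left _ _)
      have h2 : σ KK ψ ≤ ρ i₀ ψ := hσle KK (le_max_right _ _) ψ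
      have h3 : ρ i₁ ψ ≤ V := stableVal_ge hρ hVρ i₁
      have : ρ i₀ ψ < ρ i₀ ψ :=
        lt_of_lt_of_le hψlt (le_trans h3 (le_trans (h1 ▸ le_refl _) (h1 ▸ h2)))
      exact lt_irrefl _ this
    · -- `dstar = cstar` : ψ is bad at every stage `k ≥ jstar`
      have hψbad : ∀ k, jstar ≤ k → σ k ψ < ρ i₀ ψ := by
        intro k hk
        by_contra hcon2
        push_neg at hcon2
        have hlow : ∀ a : Polynomial K, a.natDegree < cstar → ρ i₀ a ≤ σ k a := by
          intro a ha
          refine hgood k a ?_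
          rw [hdeq k hk]
          omega
        obtain ⟨g, _, hglt⟩ := hbadm k
        exact absurd (hchain k hcon2 hlow g) (not_le_of_gt hglt)
      intro hψst
      obtain ⟨V, hVρ⟩ := stablePoly_val hψst
      have hVσ : IsStableVal σ ψ V := (hval ψ V hψst).mp hVρ
      obtain ⟨K₁, hK₁⟩ := hVσ
      set KK := max K₁ jstar with hKK
      have h1 : σ KK ψ = V := hK₁ KK (le_max_left _ _)
      have h3 : ρ i₁ ψ ≤ V := stableVal_ge hρ hVρ i₁
      have h4 := hψbad KK (le_max_right _ _)
      rw [h1] at h4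
      exact absurd (lt_trans (lt_of_lt_of_le hψlt h3) h4) (lt_irrefl _)
  -- the minimal unstable degree and a limit key polynomial
  set USet : Set ℕ := {n | ∃ g : Polynomial K,
    g.Monic ∧ g.natDegree = n ∧ ¬ IsStablePoly ρ g} with hUSet
  have hUne : USet.Nonempty := ⟨cstar, ψ, hψm, hψdeg, hψuns⟩
  obtain ⟨χ, hχm, hχdeg, hχuns⟩ := Nat.sInf_mem hUne
  set minf := sInf USet with hminf
  have hminf_le : minf ≤ cstar := Nat.sInf_le ⟨ψ, hψm, hψdeg, hψuns⟩
  have hsmall_stable : ∀ f : Polynomial K, f.natDegree < minf → IsStablePoly ρ f := by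
    intro f hf
    by_contra hcon2
    have hf0 : f ≠ 0 := by
      intro h0
      exact hcon2 (h0 ▸ ⟨i₀, fun j hj => by rw [(hρval j).zero, (hρval i₀).zero]⟩)
    obtain ⟨c, hc, hm, hdg⟩ := scale_monic hf0
    have hcuns : ¬ IsStablePoly ρ (C c * f) := fun h => hcon2 (stable_scale hρval hc f h)
    have hmem : (C c * f).natDegree ∈ USet := ⟨C c * f, hm, rfl, hcuns⟩
    have := Nat.sInf_le hmem
    rw [hdg] at this
    exact absurd hf (not_lt.mpr this)
  have hlim : IsLimKeyPol ρ χ := by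
    refine ⟨hχm, hχuns, fun f hf => ?_⟩
    by_contra hcon2
    push_neg at hcon2
    rw [hχdeg] at hcon2
    exact hf (hsmall_stable f hcon2)
  -- every node `ρ i`, `i ≥ i₀`, has a key polynomial of degree ≤ minf
  have hdegOf_le : ∀ i, i₀ ≤ i → degOf (ρ i) ≤ minf := by
    intro i hi
    obtain ⟨i', hii', hχlt'⟩ := unstable_exists_gt hρ hχuns i
    set ESet' : Set ℕ := {n | ∃ θ : Polynomial K,
      θ.Monic ∧ θ.natDegree = n ∧ ρ i θ < ρ i' θ} with hESet'
    have hEne' : ESet'.Nonempty := ⟨minf, χ, hχm, hχdeg, hχlt'⟩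
    obtain ⟨θ, hθm, hθdeg, hθlt⟩ := Nat.sInf_mem hEne'
    have hele : sInf ESet' ≤ minf := Nat.sInf_le ⟨χ, hχm, hχdeg, hχlt'⟩
    have hii'le : ∀ f, ρ i f ≤ ρ i' f := TOmono hρ hii'
    have hθfroz : ∀ g' : Polynomial K, g'.natDegree < θ.natDegree →
        ρ i g' = ρ i' g' := by
      intro g' hg'
      refine le_antisymm (hii'le g') ?_
      by_contra hcon2
      push_neg at hcon2
      have hg'0 : g' ≠ 0 := by
        intro h0
        rw [h0, (hρval i).zero, (hρval i').zero] at hcon2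
        exact lt_irrefl _ hcon2
      obtain ⟨c, hc, hm, hdg⟩ := scale_monic hg'0
      have hmem : (C c * g').natDegree ∈ ESet' := by
        refine ⟨C c * g', hm, rfl, ?_⟩
        rw [(hρval i).smulC, (hρval i').smulC]
        exact WithTop.add_lt_add_left (v.ne_top' c hc) hcon2
      have := Nat.sInf_le hmem
      rw [hdg] at this
      omega
    have hkey : IsKeyPol (ρ i) θ :=
      tangent_key (hρval i) (hρval i') hii'le hθm hθlt hθfroz
    have : degOf (ρ i) ≤ θ.natDegree := Nat.sInf_le ⟨θ, hkey, rfl⟩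
    omega
  -- the dichotomy
  by_cases hev : ∃ i₂, i₀ ≤ i₂ ∧ ∀ i, i₂ ≤ i → degOf (ρ i) = minf
  · obtain ⟨i₂, _, hall⟩ := hev
    exact hρni ⟨minf, χ, ⟨i₂, hall⟩, hlim, hχdeg⟩
  · push_neg at hev
    refine hχuns ?_
    have hstep : ∀ i, i₀ ≤ i → ρ i χ = ρ i₀ χ := by
      intro i hi
      obtain ⟨i', hii', hne⟩ := hev i hi
      have hi'₀ : i₀ ≤ i' := le_trans hi hii'
      have hlt' : degOf (ρ i') < minf := lt_of_le_of_ne (hdegOf_le i' hi'₀) hne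
      -- a minimal-degree key polynomial of `ρ i'`
      have hKne : {n : ℕ | ∃ φ : Polynomial K, IsKeyPol (ρ i') φ ∧ φ.natDegree = n}.Nonempty := by
        obtain ⟨φ, hφ⟩ := hρ.2.1 i'
        exact ⟨φ.natDegree, φ, hφ, rfl⟩
      obtain ⟨X, hXkey, hXdeg⟩ := Nat.sInf_mem hKne
      have hXdeg' : X.natDegree = degOf (ρ i') := hXdeg
      have hXm : X.Monic := hXkey.1
      have hXpos : 0 < X.natDegree := hXkey.2.1.1
      have hXmin := hXkey.2.1.2
      have hXL3 : ∀ (f : Polynomial K) (s : ℕ),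
          ρ i' f ≤ ρ i' (expCoeff X f s * X ^ s) :=
        minimal_le_term (hρval i') hXm hXpos hXmin
      -- a term of the X-expansion of χ of minimal ρ i₀-value
      obtain ⟨s₁, _, hs₁⟩ := (hρval i₀).exists_term_le (Finset.range (χ.natDegree + 1))
        ⟨0, by simp⟩ (fun s => expCoeff X χ s * X ^ s)
      rw [expansion hXm hXpos χ (le_refl _)] at hs₁
      -- frozen transport of the term value
      have hXc : X.natDegree < cstar := by omega
      have hecdeg : (expCoeff X χ s₁).natDegree < cstar := by
        rcases eq_or_ne (expCoeff X χ s₁) 0 with h0 | h0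
        · rw [h0]; simpa using hcstar_pos
        · have := natDegree_expCoeff_lt hXm χ s₁ h0
          omega
      have htermfroz : ρ i' (expCoeff X χ s₁ * X ^ s₁) = ρ i₀ (expCoeff X χ s₁ * X ^ s₁) := by
        rw [(hρval i').term_val, (hρval i₀).term_val,
          hfroz _ hecdeg i' hi'₀, hfroz X hXc i' hi'₀]
      have hkey1 : ρ i χ ≤ ρ i₀ χ := by
        calc ρ i χ ≤ ρ i' χ := TOmono hρ hii' χ
          _ ≤ ρ i' (expCoeff X χ s₁ * X ^ s₁) := hXL3 χ s₁
          _ = ρ i₀ (expCoeff X χ s₁ * X ^ s₁) := htermfroz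
          _ ≤ ρ i₀ χ := hs₁
      exact le_antisymm hkey1 (TOmono hρ hi χ)
    exact ⟨i₀, fun j hj => hstep j hj⟩

end MainHalf

/-! ### The forward direction -/

section Forward

variable {ι : Type*} [LinearOrder ι] {κ : Type*} [LinearOrder κ]
variable {v : FieldVal K Λ}
variable {ρ : ι → Polynomial K → WithTop Λ} {σ : κ → Polynomial K → WithTop Λ}

theorem famEquiv_stableVal (hρ : IsTOFamily v ρ) (hσ : IsTOFamily v σ)
    (hfe : FamEquiv ρ σ) {f : Polynomial K} {β : WithTop Λ}
    (h : IsStableVal ρ f β) : IsStableVal σ f β := by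
  obtain ⟨i₁, hi₁⟩ := h
  have hub : ∀ j, σ j f ≤ β := by
    intro j
    obtain ⟨i, hi⟩ := hfe.2 j
    exact le_trans (hi f) (stableVal_ge hρ ⟨i₁, hi₁⟩ i)
  obtain ⟨j₀, hj₀⟩ := hfe.1 i₁
  have hlb : β ≤ σ j₀ f := by
    calc β = ρ i₁ f := (hi₁ i₁ le_rfl).symm
      _ ≤ σ j₀ f := hj₀ f
  exact ⟨j₀, fun j hj => le_antisymm (hub j)
    (le_trans hlb (TOmono hσ hj f))⟩

theorem famEquiv_stablePoly (hρ : IsTOFamily v ρ) (hσ : IsTOFamily v σ)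
    (hfe : FamEquiv ρ σ) {f : Polynomial K}
    (h : IsStablePoly ρ f) : IsStablePoly σ f := by
  obtain ⟨β, hβ⟩ := stablePoly_val h
  obtain ⟨j₀, hj₀⟩ := famEquiv_stableVal hρ hσ hfe hβ
  exact ⟨j₀, fun j hj => by rw [hj₀ j hj, hj₀ j₀ le_rfl]⟩

theorem famEquiv_symm (hfe : FamEquiv ρ σ) : FamEquiv σ ρ := ⟨hfe.2, hfe.1⟩

end Forward

end MLVAux
end MLV

/-- Two totally ordered families, neither of which is an inessential continuous family,
are equivalent if and only if they have the same stable polynomials and the same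
stable values. -/
theorem statement_11 {K : Type*} [Field K] {Λ : Type*} [AddCommGroup Λ] [LinearOrder Λ] [IsOrderedAddMonoid Λ]
    {ι : Type*} [LinearOrder ι] [Nonempty ι] {κ : Type*} [LinearOrder κ] [Nonempty κ]
    (v : FieldVal K Λ) (ρ : ι → Polynomial K → WithTop Λ)
    (σ : κ → Polynomial K → WithTop Λ)
    (hρ : IsTOFamily v ρ) (hσ : IsTOFamily v σ)
    (hρni : ¬ ∃ (m : ℕ) (φ : Polynomial K),
      HasStableDeg ρ m ∧ IsLimKeyPol ρ φ ∧ φ.natDegree = m)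
    (hσni : ¬ ∃ (m : ℕ) (φ : Polynomial K),
      HasStableDeg σ m ∧ IsLimKeyPol σ φ ∧ φ.natDegree = m) :
    FamEquiv ρ σ ↔
      ((∀ f : Polynomial K, IsStablePoly ρ f ↔ IsStablePoly σ f) ∧
        ∀ (f : Polynomial K) (β : WithTop Λ), IsStablePoly ρ f →
          (IsStableVal ρ f β ↔ IsStableVal σ f β)) := by
  constructor
  · intro hfe
    refine ⟨fun f => ⟨fun h => MLVAux.famEquiv_stablePoly hρ hσ hfe h,
      fun h => MLVAux.famEquiv_stablePoly hσ hρ (MLVAux.famEquiv_symm hfe) h⟩,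
      fun f β _ => ⟨fun h => MLVAux.famEquiv_stableVal hρ hσ hfe h,
      fun h => MLVAux.famEquiv_stableVal hσ hρ (MLVAux.famEquiv_symm hfe) h⟩⟩
  · rintro ⟨hstab, hval⟩
    constructor
    · intro i
      obtain ⟨j, hj⟩ := MLVAux.main_half v ρ σ hρ hσ hρni hstab hval i
      exact ⟨j, fun f => hj f⟩
    · intro j
      have hstab' : ∀ f : Polynomial K, IsStablePoly σ f ↔ IsStablePoly ρ f :=
        fun f => (hstab f).symm
      have hval' : ∀ (f : Polynomial K) (β : WithTop Λ), IsStablePoly σ f →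
          (IsStableVal σ f β ↔ IsStableVal ρ f β) :=
        fun f β h => (hval f β ((hstab f).mpr h)).symm
      obtain ⟨i, hi⟩ := MLVAux.main_half v σ ρ hσ hρ hσni hstab' hval' j
      exact ⟨i, fun f => hi f⟩
end

section
/- For every pair of valuations μ, ν ∈ T, there exists a valuation ρ ∈ T with ρ ≤ μ and ρ ≤ ν; that is, the intervals (−∞,μ] = {ρ ∈ T : ρ ≤ μ} and (−∞,ν] = {ρ ∈ T : ρ ≤ ν} have nonempty intersection. -/
open Polynomial

open MLV

namespace GaussAux

variable {K : Type*} [Field K] {Λ : Type*} [AddCommGroup Λ] [LinearOrder Λ] [IsOrderedAddMonoid Λ]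

/-- generic "valuation of a finite sum is at least a lower bound of the terms" -/
lemma sum_ge {R α : Type*} [AddCommMonoid R] (w : R → WithTop Λ)
    (h0 : w 0 = ⊤) (hadd : ∀ a b : R, min (w a) (w b) ≤ w (a + b))
    (s : Finset α) (F : α → R) (c : WithTop Λ)
    (hc : ∀ i ∈ s, c ≤ w (F i)) : c ≤ w (∑ i ∈ s, F i) := by
  classical
  induction s using Finset.induction_on with
  | empty => simp [h0]
  | insert _ _ hni ih =>
      rename_i a s
      rw [Finset.sum_insert hni]
      refine le_trans ?_ (hadd _ _)
      exact le_min (hc a (Finset.mem_insert_self a s))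
        (ih fun i hi => hc i (Finset.mem_insert_of_mem hi))

variable (v : FieldVal K Λ)

lemma v_eq_top_iff (a : K) : v.v a = ⊤ ↔ a = 0 := by
  constructor
  · intro h; by_contra ha; exact v.ne_top' a ha h
  · rintro rfl; exact v.map_zero'

lemma v_neg_one : v.v (-1) = 0 := by
  have h : v.v (-1) + v.v (-1) = 0 := by
    rw [← v.map_mul']; norm_num [v.map_one']
  have hne : v.v (-1) ≠ ⊤ := v.ne_top' _ (by norm_num)
  lift v.v (-1) to Λ using hne with b hb
  have hb0 : b + b = 0 := by exact_mod_cast h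
  have : b = 0 := by
    rcases lt_trichotomy b 0 with hlt | he | hgt
    · exact absurd hb0 (ne_of_lt (by simpa using add_lt_add hlt hlt))
    · exact he
    · exact absurd hb0 (ne_of_gt (by simpa using add_lt_add hgt hgt))
  exact_mod_cast this

lemma v_neg (a : K) : v.v (-a) = v.v a := by
  have : (-a) = (-1) * a := by ring
  rw [this, v.map_mul', v_neg_one, zero_add]

lemma v_add_eq_left {a b : K} (h : v.v a < v.v b) : v.v (a + b) = v.v a := by
  have h3 : min (v.v (a + b)) (v.v (-b)) ≤ v.v a := by
    have he : (a + b) + (-b) = a := by ring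
    calc min (v.v (a + b)) (v.v (-b)) ≤ v.v ((a + b) + (-b)) := v.map_add' _ _
      _ = v.v a := by rw [he]
  refine le_antisymm ?_ (le_trans (le_min le_rfl h.le) (v.map_add' a b))
  by_contra hc
  push_neg at hc
  exact absurd h3 (not_le.mpr (lt_min hc (by rw [v_neg]; exact h)))


variable (γ : Λ)

/-- the term `v(f_s) + s·γ` of the Gauss valuation -/
noncomputable def gterm (f : Polynomial K) (s : ℕ) : WithTop Λ :=
  v.v (f.coeff s) + ((s • γ : Λ) : WithTop Λ)

/-- the Gauss valuation `f ↦ min_s (v(f_s) + s·γ)` -/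
noncomputable def gval (f : Polynomial K) : WithTop Λ :=
  (Finset.range (f.natDegree + 1)).inf'
    (Finset.nonempty_range_iff.mpr (Nat.succ_ne_zero _)) (gterm v γ f)

lemma gterm_eq_top_of_gt {f : Polynomial K} {s : ℕ} (h : f.natDegree < s) :
    gterm v γ f s = ⊤ := by
  rw [gterm, Polynomial.coeff_eq_zero_of_natDegree_lt h, v.map_zero', top_add]

lemma gval_le_gterm (f : Polynomial K) (s : ℕ) : gval v γ f ≤ gterm v γ f s := by
  by_cases h : s ≤ f.natDegree
  · exact Finset.inf'_le _ (Finset.mem_range.mpr (Nat.lt_succ_of_le h))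
  · rw [gterm_eq_top_of_gt v γ (not_le.mp h)]; exact le_top

lemma gval_eq_inf_range {f : Polynomial K} {N : ℕ} (h : f.natDegree ≤ N) :
    gval v γ f = (Finset.range (N + 1)).inf'
      (Finset.nonempty_range_iff.mpr (Nat.succ_ne_zero _)) (gterm v γ f) := by
  refine le_antisymm (Finset.le_inf' _ _ fun s _ => gval_le_gterm v γ f s) ?_
  refine Finset.le_inf' _ _ fun s hs => Finset.inf'_le _ ?_
  exact Finset.mem_range.mpr (lt_of_lt_of_le (Finset.mem_range.mp hs) (by omega))

lemma exists_gval_index (f : Polynomial K) :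
    ∃ i₀, i₀ ≤ f.natDegree ∧ gterm v γ f i₀ = gval v γ f ∧
      ∀ i, i < i₀ → gval v γ f < gterm v γ f i := by
  obtain ⟨i, hi, hieq⟩ := Finset.exists_mem_eq_inf'
    (Finset.nonempty_range_iff.mpr (Nat.succ_ne_zero (f.natDegree))) (gterm v γ f)
  have hex : ∃ j, gterm v γ f j = gval v γ f := ⟨i, hieq.symm⟩
  refine ⟨Nat.find hex, ?_, Nat.find_spec hex, fun j hj => ?_⟩
  · exact le_trans (Nat.find_min' hex hieq.symm) (Nat.lt_succ_iff.mp (Finset.mem_range.mp hi))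
  · exact lt_of_le_of_ne (gval_le_gterm v γ f j) (fun he => Nat.find_min hex hj he.symm)

lemma gval_ne_top {f : Polynomial K} (hf : f ≠ 0) : gval v γ f ≠ ⊤ := by
  intro h
  have h1 := gval_le_gterm v γ f f.natDegree
  rw [h, top_le_iff, gterm, WithTop.add_eq_top] at h1
  rcases h1 with h1 | h1
  · have : f.coeff f.natDegree = 0 := (v_eq_top_iff v _).mp h1
    exact Polynomial.leadingCoeff_ne_zero.mpr hf this
  · exact WithTop.coe_ne_top h1

lemma gval_zero : gval v γ (0 : Polynomial K) = ⊤ := by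
  rw [gval]
  simp [gterm, v.map_zero']

lemma gval_C (a : K) : gval v γ (Polynomial.C a) = v.v a := by
  rw [gval]
  simp [gterm]


lemma coe_nsmul (s : ℕ) (δ : Λ) : ((s • δ : Λ) : WithTop Λ) = s • (δ : WithTop Λ) := by
  induction s with
  | zero => simp
  | succ n ih => rw [succ_nsmul, succ_nsmul, WithTop.coe_add, ih]

lemma sum_ge_inf {α : Type*} (s : Finset α) (hne : s.Nonempty) (F : α → K) :
    s.inf' hne (fun i => v.v (F i)) ≤ v.v (∑ i ∈ s, F i) :=
  sum_ge v.v v.map_zero' v.map_add' s F _ (fun q hq => Finset.inf'_le _ hq)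

lemma gval_add (f g : Polynomial K) :
    min (gval v γ f) (gval v γ g) ≤ gval v γ (f + g) := by
  rw [gval_eq_inf_range v γ
    (le_max_left (f + g).natDegree (max f.natDegree g.natDegree))]
  refine Finset.le_inf' _ _ fun s _ => ?_
  have h1 : min (gterm v γ f s) (gterm v γ g s) ≤ gterm v γ (f + g) s := by
    rw [gterm, gterm, gterm, Polynomial.coeff_add, min_add_add_right]
    exact add_le_add_left (v.map_add' _ _) _
  exact le_trans (min_le_min (gval_le_gterm v γ f s) (gval_le_gterm v γ g s)) h1

lemma hrearr (i j : ℕ) (a b : WithTop Λ) :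
    (a + ((i • γ : Λ) : WithTop Λ)) + (b + ((j • γ : Λ) : WithTop Λ))
      = (a + b) + (((i + j) • γ : Λ) : WithTop Λ) := by
  rw [add_add_add_comm, add_nsmul, WithTop.coe_add]

lemma gval_mul (f g : Polynomial K) :
    gval v γ (f * g) = gval v γ f + gval v γ g := by
  by_cases hf : f = 0
  · rw [hf, zero_mul, gval_zero, top_add]
  by_cases hg : g = 0
  · rw [hg, mul_zero, gval_zero, add_top]
  obtain ⟨i₀, hi₀le, hi₀eq, hi₀min⟩ := exists_gval_index v γ f
  obtain ⟨j₀, hj₀le, hj₀eq, hj₀min⟩ := exists_gval_index v γ g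
  have hfne := gval_ne_top v γ hf
  have hgne := gval_ne_top v γ hg
  have hkey : ∀ i j : ℕ, i + j = i₀ + j₀ → (i, j) ≠ (i₀, j₀) →
      v.v (f.coeff i₀ * g.coeff j₀) < v.v (f.coeff i * g.coeff j) := by
    intro i j hij hne
    have hcases : (i < i₀ ∧ j₀ ≤ j) ∨ (i₀ ≤ i ∧ j < j₀) := by
      rcases lt_trichotomy i i₀ with h | h | h
      · exact Or.inl ⟨h, by omega⟩
      · exact absurd (by subst h; omega : j = j₀) (by simpa [Prod.ext_iff, h] using hne)
      · exact Or.inr ⟨h.le, by omega⟩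
    have hstrict : gval v γ f + gval v γ g < gterm v γ f i + gterm v γ g j := by
      rcases hcases with ⟨h1, h2⟩ | ⟨h1, h2⟩
      · calc gval v γ f + gval v γ g < gterm v γ f i + gval v γ g :=
              WithTop.add_lt_add_right hgne (hi₀min i h1)
          _ ≤ gterm v γ f i + gterm v γ g j :=
              add_le_add_right (le_trans (gval_le_gterm v γ g j) le_rfl) _
      · calc gval v γ f + gval v γ g < gval v γ f + gterm v γ g j :=
              WithTop.add_lt_add_left hfne (hj₀min j h2)
          _ ≤ gterm v γ f i + gterm v γ g j :=
              add_le_add_left (gval_le_gterm v γ f i) _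
    rw [← hi₀eq, ← hj₀eq, gterm, gterm, gterm, gterm, hrearr, hrearr, hij] at hstrict
    rw [v.map_mul', v.map_mul']
    exact (WithTop.add_lt_add_iff_right WithTop.coe_ne_top).mp hstrict
  have hcoeff : v.v ((f * g).coeff (i₀ + j₀))
      = v.v (f.coeff i₀) + v.v (g.coeff j₀) := by
    rw [Polynomial.coeff_mul]
    have hmem : (i₀, j₀) ∈ Finset.HasAntidiagonal.antidiagonal (i₀ + j₀) :=
      Finset.HasAntidiagonal.mem_antidiagonal.mpr rfl
    rw [← Finset.add_sum_erase _ _ hmem]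
    rcases Finset.eq_empty_or_nonempty ((Finset.HasAntidiagonal.antidiagonal (i₀ + j₀)).erase (i₀, j₀)) with he | hne
    · rw [he, Finset.sum_empty, add_zero, v.map_mul']
    · obtain ⟨p, hp, hpeq⟩ := Finset.exists_mem_eq_inf' hne
        (fun p : ℕ × ℕ => v.v (f.coeff p.1 * g.coeff p.2))
      have hrest : v.v (f.coeff i₀ * g.coeff j₀)
          < v.v (∑ p ∈ (Finset.HasAntidiagonal.antidiagonal (i₀ + j₀)).erase (i₀, j₀),
              f.coeff p.1 * g.coeff p.2) := by
        refine lt_of_lt_of_le ?_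
          (sum_ge_inf v _ hne (fun p : ℕ × ℕ => f.coeff p.1 * g.coeff p.2))
        rw [hpeq]
        have hp' := Finset.mem_erase.mp hp
        exact hkey p.1 p.2 (Finset.HasAntidiagonal.mem_antidiagonal.mp hp'.2)
          (by simpa [Prod.ext_iff] using hp'.1)
      rw [v_add_eq_left v hrest, v.map_mul']
  refine le_antisymm ?_ ?_
  · refine le_trans (gval_le_gterm v γ (f * g) (i₀ + j₀)) (le_of_eq ?_)
    calc gterm v γ (f * g) (i₀ + j₀)
        = gterm v γ f i₀ + gterm v γ g j₀ := by
          rw [gterm, gterm, gterm, hrearr, hcoeff]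
      _ = gval v γ f + gval v γ g := by rw [hi₀eq, hj₀eq]
  · rw [gval]
    refine Finset.le_inf' _ _ fun k _ => ?_
    rw [gterm, Polynomial.coeff_mul]
    have hne : (Finset.HasAntidiagonal.antidiagonal k).Nonempty :=
      ⟨(0, k), Finset.HasAntidiagonal.mem_antidiagonal.mpr (zero_add k)⟩
    obtain ⟨p, hp, hpeq⟩ := Finset.exists_mem_eq_inf' hne
      (fun p : ℕ × ℕ => v.v (f.coeff p.1 * g.coeff p.2))
    have h1 := sum_ge_inf v (Finset.HasAntidiagonal.antidiagonal k) hne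
      (fun p : ℕ × ℕ => f.coeff p.1 * g.coeff p.2)
    refine le_trans ?_ (add_le_add_left h1 _)
    rw [hpeq, v.map_mul']
    have hk' : p.1 + p.2 = k := Finset.HasAntidiagonal.mem_antidiagonal.mp hp
    calc gval v γ f + gval v γ g
        ≤ gterm v γ f p.1 + gterm v γ g p.2 :=
          add_le_add (gval_le_gterm v γ f p.1) (gval_le_gterm v γ g p.2)
      _ = (v.v (f.coeff p.1) + v.v (g.coeff p.2)) + (((p.1 + p.2) • γ : Λ) : WithTop Λ) :=
          hrearr γ p.1 p.2 _ _
      _ = (v.v (f.coeff p.1) + v.v (g.coeff p.2)) + ((k • γ : Λ) : WithTop Λ) := by rw [hk']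


lemma gval_one : gval v γ (1 : Polynomial K) = 0 := by
  rw [← Polynomial.C_1, gval_C, v.map_one']

lemma gval_isValT : IsValT v (gval v γ) :=
  ⟨gval_one v γ, gval_zero v γ, gval_mul v γ, gval_add v γ, gval_C v γ⟩

lemma gval_le {μ : Polynomial K → WithTop Λ} (hμ : IsValT v μ)
    (hγ : (γ : WithTop Λ) ≤ μ Polynomial.X) (f : Polynomial K) :
    gval v γ f ≤ μ f := by
  obtain ⟨hμ1, hμ0, hμm, hμa, hμC⟩ := hμ
  have hX : ∀ s : ℕ, μ (Polynomial.X ^ s) = s • (μ Polynomial.X) := by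
    intro s
    induction s with
    | zero => simpa using hμ1
    | succ n ih => rw [pow_succ, hμm, ih, succ_nsmul]
  have hmono : ∀ s : ℕ, gval v γ f ≤ μ (Polynomial.C (f.coeff s) * Polynomial.X ^ s) := by
    intro s
    rw [hμm, hμC, hX]
    refine le_trans (gval_le_gterm v γ f s) ?_
    rw [gterm]
    refine add_le_add_right ?_ _
    calc ((s • γ : Λ) : WithTop Λ) = s • (γ : WithTop Λ) := coe_nsmul s γ
      _ ≤ s • μ Polynomial.X := nsmul_le_nsmul_right hγ s
  conv_rhs => rw [Polynomial.as_sum_range_C_mul_X_pow f]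
  exact sum_ge μ hμ0 hμa _ _ _ (fun s _ => hmono s)

end GaussAux


/-- Any two valuations in `T` have a common lower bound in `T`. -/
theorem statement_16 {K : Type*} [Field K] {Λ : Type*} [AddCommGroup Λ] [LinearOrder Λ] [IsOrderedAddMonoid Λ]
    (v : FieldVal K Λ) (μ ν : Polynomial K → WithTop Λ)
    (hμ : IsValT v μ) (hν : IsValT v ν) :
    ∃ ρ : Polynomial K → WithTop Λ, IsValT v ρ ∧ ρ ≤ μ ∧ ρ ≤ ν := by
  obtain ⟨γ, hγμ, hγν⟩ : ∃ γ : Λ, (γ : WithTop Λ) ≤ μ Polynomial.X ∧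
      (γ : WithTop Λ) ≤ ν Polynomial.X := by
    by_cases h : min (μ Polynomial.X) (ν Polynomial.X) = ⊤
    · rw [min_eq_top] at h
      exact ⟨0, h.1 ▸ le_top, h.2 ▸ le_top⟩
    · obtain ⟨α, hα⟩ := WithTop.ne_top_iff_exists.mp h
      exact ⟨α, le_trans (hα.le.trans (min_le_left _ _)) le_rfl,
        le_trans (hα.le.trans (min_le_right _ _)) le_rfl⟩
  exact ⟨GaussAux.gval v γ, GaussAux.gval_isValT v γ,
    GaussAux.gval_le v γ hμ hγμ, GaussAux.gval_le v γ hν hγν⟩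
end
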